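/- arXiv:1802.01226 — 11 statements merged into one kernel-verified Lean document; each statement's English description precedes it below -/
import Mathlib

section
/- Soundness of the Darboux equality rule (dbx): Let f be a polynomial vector field on ℝⁿ, let Q ⊆ ℝⁿ, and let p, g be polynomials such that L_f(p)(x) = g(x)·p(x) for every x ∈ Q. If φ : [0,T] → ℝⁿ is a solution of x' = f(x) with φ(t) ∈ Q for all t ∈ [0,T] and p(φ(0)) = 0, then p(φ(t)) = 0 for all t ∈ [0,T]. -/
open MvPolynomial Set

/-- Lie derivative of polynomial `p` along the polynomial vector field `f`. -/
noncomputable def lieD {n : ℕ} (f : Fin n → MvPolynomial (Fin n) ℝ)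
    (p : MvPolynomial (Fin n) ℝ) : MvPolynomial (Fin n) ℝ :=
  ∑ i, pderiv i p * f i

/-- `φ` is a solution of `x' = f(x)` on `[0,T]`. -/
def IsSol {n : ℕ} (f : Fin n → MvPolynomial (Fin n) ℝ) (T : ℝ)
    (φ : ℝ → (Fin n → ℝ)) : Prop :=
  ∀ t ∈ Icc (0 : ℝ) T, HasDerivWithinAt φ (fun i => eval (φ t) (f i)) (Icc (0 : ℝ) T) t

/-- Chain rule: derivative of a polynomial along a differentiable curve. -/
lemma eval_hasDerivWithinAt {n : ℕ} {φ : ℝ → (Fin n → ℝ)} {v : Fin n → ℝ}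
    {s : Set ℝ} {t : ℝ} (hφ : HasDerivWithinAt φ v s t)
    (p : MvPolynomial (Fin n) ℝ) :
    HasDerivWithinAt (fun u => eval (φ u) p) (∑ i, eval (φ t) (pderiv i p) * v i) s t := by
  induction p using MvPolynomial.induction_on with
  | C a => simpa using (hasDerivWithinAt_const t s a)
  | add p q hp hq =>
      simpa [add_mul, Finset.sum_add_distrib] using hp.fun_add hq
  | mul_X p i hp =>
      have hcomp : HasDerivWithinAt (fun u => φ u i) (v i) s t := by
        have := (ContinuousLinearMap.proj (R := ℝ) (φ := fun _ : Fin n => ℝ)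
          i).hasFDerivAt.comp_hasDerivWithinAt t hφ
        exact this
      have h2 : HasDerivWithinAt (fun u => eval (φ u) p * φ u i) _ s t := hp.mul hcomp
      convert h2 using 1
      · ext u; simp
      have hA : (∑ x, eval (φ t) p * eval (φ t) (if i = x then 1 else 0) * v x)
          = eval (φ t) p * v i := by
        simp [apply_ite (eval (φ t)), mul_ite, ite_mul]
      simp only [pderiv_mul, pderiv_X, Pi.single_apply, map_add, map_mul, eval_X, add_mul,
        Finset.sum_add_distrib]
      rw [hA]
      congr 1
      rw [Finset.sum_mul]
      exact Finset.sum_congr rfl (fun j _ => by ring)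

/-- Soundness of the Darboux equality rule (dbx). -/
theorem dbx_sound {n : ℕ} (hn : 1 ≤ n) (f : Fin n → MvPolynomial (Fin n) ℝ)
    (Q : Set (Fin n → ℝ)) (p g : MvPolynomial (Fin n) ℝ)
    (hdbx : ∀ x ∈ Q, eval x (lieD f p) = eval x g * eval x p)
    (T : ℝ) (hT : 0 ≤ T) (φ : ℝ → (Fin n → ℝ))
    (hsol : IsSol f T φ) (hQ : ∀ t ∈ Icc (0 : ℝ) T, φ t ∈ Q)
    (h0 : eval (φ 0) p = 0) :
    ∀ t ∈ Icc (0 : ℝ) T, eval (φ t) p = 0 := by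
  set y : ℝ → ℝ := fun u => eval (φ u) p with hy
  have hderiv : ∀ t ∈ Icc (0 : ℝ) T,
      HasDerivWithinAt y (eval (φ t) g * y t) (Icc (0 : ℝ) T) t := by
    intro t ht
    have h1 := eval_hasDerivWithinAt (hsol t ht) p
    have h2 : (∑ i, eval (φ t) (pderiv i p) * eval (φ t) (f i)) = eval (φ t) g * y t := by
      rw [hy]
      rw [← hdbx (φ t) (hQ t ht)]
      simp [lieD]
    rwa [h2] at h1
  -- continuity of φ and y on [0,T]
  have hφc : ContinuousOn φ (Icc (0 : ℝ) T) := fun t ht => (hsol t ht).continuousWithinAt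
  have hyc : ContinuousOn y (Icc (0 : ℝ) T) := fun t ht => (hderiv t ht).continuousWithinAt
  -- bound on |g ∘ φ|
  have hgc : ContinuousOn (fun t => eval (φ t) g) (Icc (0 : ℝ) T) :=
    (MvPolynomial.continuous_eval (p := g)).comp_continuousOn hφc
  obtain ⟨K, hK⟩ := isCompact_Icc.exists_bound_of_continuousOn hgc
  have key := norm_le_gronwallBound_of_norm_deriv_right_le (f := y)
    (f' := fun t => eval (φ t) g * y t) (δ := 0) (K := K) (ε := 0) (a := 0) (b := T)
    hyc
    (fun x hx => ((hderiv x (Ico_subset_Icc_self hx)).mono_of_mem_nhdsWithin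
      (Icc_mem_nhdsGE_of_mem hx)))
    (by simp [hy, h0])
    (by
      intro x hx
      have h1 : ‖eval (φ x) g‖ ≤ K := hK x (Ico_subset_Icc_self hx)
      calc ‖eval (φ x) g * y x‖ = ‖eval (φ x) g‖ * ‖y x‖ := norm_mul _ _
        _ ≤ K * ‖y x‖ := mul_le_mul_of_nonneg_right h1 (norm_nonneg _)
        _ ≤ K * ‖y x‖ + 0 := by simp)
  intro t ht
  have := key t ht
  rw [gronwallBound_ε0_δ0] at this
  have : ‖y t‖ ≤ 0 := this
  simpa [hy] using le_antisymm this (norm_nonneg _)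
end

section
/- Soundness of the Darboux inequality rule (dbx≽): Let f be a polynomial vector field on ℝⁿ, let Q ⊆ ℝⁿ, and let p, g be polynomials such that L_f(p)(x) ≥ g(x)·p(x) for every x ∈ Q. If φ : [0,T] → ℝⁿ is a solution of x' = f(x) with φ(t) ∈ Q for all t ∈ [0,T], then: if p(φ(0)) ≥ 0 then p(φ(t)) ≥ 0 for all t ∈ [0,T], and if p(φ(0)) > 0 then p(φ(t)) > 0 for all t ∈ [0,T]. -/
open MvPolynomial Set

lemma lieD_C {n : ℕ} (f : Fin n → MvPolynomial (Fin n) ℝ) (a : ℝ) :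
    lieD f (C a) = 0 := by
  simp [lieD]

lemma lieD_add {n : ℕ} (f : Fin n → MvPolynomial (Fin n) ℝ) (p q : MvPolynomial (Fin n) ℝ) :
    lieD f (p + q) = lieD f p + lieD f q := by
  simp [lieD, add_mul, Finset.sum_add_distrib]

lemma lieD_mul_X {n : ℕ} (f : Fin n → MvPolynomial (Fin n) ℝ) (p : MvPolynomial (Fin n) ℝ)
    (i : Fin n) : lieD f (p * X i) = lieD f p * X i + p * f i := by
  unfold lieD
  rw [Finset.sum_mul]
  have : ∀ j : Fin n, pderiv j (p * X i) * f j
      = pderiv j p * X i * f j + (if i = j then p * f i else 0) := by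
    intro j
    rw [pderiv_mul, pderiv_X]
    rcases eq_or_ne i j with rfl | h
    · simp [Pi.single_apply]; ring
    · simp [h, Pi.single_apply, Ne.symm h]
  rw [Finset.sum_congr rfl fun j _ => this j, Finset.sum_add_distrib,
    Finset.sum_ite_eq (Finset.univ) i (fun _ => p * f i)]
  simp [Finset.sum_congr rfl fun j _ => (by ring : pderiv j p * X i * f j = pderiv j p * f j * X i)]

lemma deriv_along {n : ℕ} (f : Fin n → MvPolynomial (Fin n) ℝ) (φ : ℝ → (Fin n → ℝ))
    (s : Set ℝ) (t : ℝ)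
    (hφ : HasDerivWithinAt φ (fun i => eval (φ t) (f i)) s t)
    (p : MvPolynomial (Fin n) ℝ) :
    HasDerivWithinAt (fun τ => eval (φ τ) p) (eval (φ t) (lieD f p)) s t := by
  induction p using MvPolynomial.induction_on with
  | C a => simpa [lieD_C] using (hasDerivWithinAt_const t s a)
  | add p q hp hq => simpa [lieD_add] using hp.fun_add hq
  | mul_X p i hp =>
    have hi : HasDerivWithinAt (fun τ => φ τ i) (eval (φ t) (f i)) s t :=
      hasDerivWithinAt_pi.1 hφ i
    have := hp.fun_mul hi
    simpa [lieD_mul_X, mul_comm, mul_assoc, mul_left_comm] using this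

/-- Soundness of the Darboux inequality rule (dbx≽). -/
theorem dbx_ineq_sound {n : ℕ} (hn : 1 ≤ n) (f : Fin n → MvPolynomial (Fin n) ℝ)
    (Q : Set (Fin n → ℝ)) (p g : MvPolynomial (Fin n) ℝ)
    (hdbx : ∀ x ∈ Q, eval x g * eval x p ≤ eval x (lieD f p))
    (T : ℝ) (hT : 0 ≤ T) (φ : ℝ → (Fin n → ℝ))
    (hsol : IsSol f T φ) (hQ : ∀ t ∈ Icc (0 : ℝ) T, φ t ∈ Q) :
    (0 ≤ eval (φ 0) p → ∀ t ∈ Icc (0 : ℝ) T, 0 ≤ eval (φ t) p) ∧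
    (0 < eval (φ 0) p → ∀ t ∈ Icc (0 : ℝ) T, 0 < eval (φ t) p) := by
  set I := Icc (0 : ℝ) T with hI
  have h0I : (0 : ℝ) ∈ I := ⟨le_refl 0, hT⟩
  have hφc : ContinuousOn φ I := fun t ht => (hsol t ht).continuousWithinAt
  -- continuous extension of g ∘ φ
  have hgc : ContinuousOn (fun s => eval (φ s) g) I :=
    ((MvPolynomial.continuous_eval g).comp_continuousOn hφc)
  set h : ℝ → ℝ := IccExtend hT (fun s : I => eval (φ (s : ℝ)) g) with hh
  have hhc : Continuous h := by
    apply Continuous.Icc_extend'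
    exact continuousOn_iff_continuous_restrict.1 hgc
  have hagree : ∀ t ∈ I, h t = eval (φ t) g := fun t ht => by
    simp [hh, IccExtend_of_mem hT _ ht]
  set G : ℝ → ℝ := fun t => ∫ s in (0:ℝ)..t, h s with hG
  have hGd : ∀ t : ℝ, HasDerivAt G (h t) t := fun t =>
    intervalIntegral.integral_hasDerivAt_right (hhc.intervalIntegrable 0 t)
      (hhc.stronglyMeasurableAtFilter _ _) hhc.continuousAt
  set y : ℝ → ℝ := fun t => eval (φ t) p with hy
  set z : ℝ → ℝ := fun t => y t * Real.exp (-G t) with hz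
  have hyd : ∀ t ∈ I, HasDerivWithinAt y (eval (φ t) (lieD f p)) I t := fun t ht =>
    deriv_along f φ I t (hsol t ht) p
  have hzd : ∀ t ∈ I, HasDerivWithinAt z
      ((eval (φ t) (lieD f p) - eval (φ t) g * y t) * Real.exp (-G t)) I t := by
    intro t ht
    have hE : HasDerivWithinAt (fun τ => Real.exp (-G τ))
        (-h t * Real.exp (-G t)) I t := by
      have := (((hGd t).hasDerivWithinAt (s := I)).neg).exp
      simpa [mul_comm] using this
    have := (hyd t ht).fun_mul hE
    rw [hagree t ht] at this
    refine this.congr_deriv ?_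
    ring
  have hzc : ContinuousOn z I := fun t ht => (hzd t ht).continuousWithinAt
  have hmono : MonotoneOn z I := by
    apply monotoneOn_of_hasDerivWithinAt_nonneg (convex_Icc 0 T) hzc
      (f' := fun t => (eval (φ t) (lieD f p) - eval (φ t) g * y t) * Real.exp (-G t))
    · intro t ht
      exact ((hzd t (interior_subset ht)).mono interior_subset)
    · intro t ht
      have ht' : t ∈ I := interior_subset ht
      have := hdbx (φ t) (hQ t ht')
      have : 0 ≤ eval (φ t) (lieD f p) - eval (φ t) g * y t := by
        simp only [hy]; linarith
      positivity
  have hz0 : z 0 = y 0 := by simp [hz, hG]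
  have hkey : ∀ t ∈ I, y 0 ≤ y t * Real.exp (-G t) := by
    intro t ht
    have := hmono h0I ht ht.1
    rwa [hz0] at this
  constructor
  · intro h0 t ht
    have := hkey t ht
    have hexp : 0 < Real.exp (-G t) := Real.exp_pos _
    nlinarith [this]
  · intro h0 t ht
    have := hkey t ht
    have hexp : 0 < Real.exp (-G t) := Real.exp_pos _
    nlinarith [this]
end

section
/- Soundness of the vectorial Darboux rule (vdbx): Let f be a polynomial vector field on ℝⁿ, let Q ⊆ ℝⁿ, let m ≥ 1, let p₁,…,p_m be polynomials and let G be an m×m matrix of polynomials such that L_f(pᵢ)(x) = Σ_{j=1}^m G_{ij}(x)·p_j(x) for every x ∈ Q and every i. If φ : [0,T] → ℝⁿ is a solution of x' = f(x) with φ(t) ∈ Q for all t ∈ [0,T] and pᵢ(φ(0)) = 0 for every i, then pᵢ(φ(t)) = 0 for every i and every t ∈ [0,T]. -/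
open MvPolynomial Set

lemma lieD_chain {n : ℕ} {f : Fin n → MvPolynomial (Fin n) ℝ} {s : Set ℝ} {t : ℝ}
    {φ : ℝ → (Fin n → ℝ)}
    (hφ : HasDerivWithinAt φ (fun i => eval (φ t) (f i)) s t)
    (p : MvPolynomial (Fin n) ℝ) :
    HasDerivWithinAt (fun τ => eval (φ τ) p) (eval (φ t) (lieD f p)) s t := by
  induction p using MvPolynomial.induction_on with
  | C a =>
      have : eval (φ t) (lieD f (C a)) = 0 := by simp [lieD]
      rw [this]
      simpa using (hasDerivWithinAt_const t s (a : ℝ))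
  | add p q hp hq =>
      have h := hp.add hq
      convert h using 1
      · rfl
      · rfl
      · funext τ; simp
      · rw [lieD_add, map_add]
  | mul_X p i hp =>
      have hx : HasDerivWithinAt (fun τ => φ τ i) (eval (φ t) (f i)) s t := by
        have := hasDerivWithinAt_pi.1 hφ i
        simpa using this
      have h := hp.mul hx
      convert h using 1
      · rfl
      · rfl
      · funext τ; simp
      · rw [lieD_mul_X, map_add, map_mul, map_mul, eval_X]

/-- Soundness of the vectorial Darboux rule (vdbx). -/
theorem vdbx_sound {n : ℕ} (hn : 1 ≤ n) (f : Fin n → MvPolynomial (Fin n) ℝ)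
    (Q : Set (Fin n → ℝ)) (m : ℕ) (hm : 1 ≤ m)
    (p : Fin m → MvPolynomial (Fin n) ℝ) (G : Fin m → Fin m → MvPolynomial (Fin n) ℝ)
    (hdbx : ∀ x ∈ Q, ∀ i, eval x (lieD f (p i)) = ∑ j, eval x (G i j) * eval x (p j))
    (T : ℝ) (hT : 0 ≤ T) (φ : ℝ → (Fin n → ℝ))
    (hsol : IsSol f T φ) (hQ : ∀ t ∈ Icc (0 : ℝ) T, φ t ∈ Q)
    (h0 : ∀ i, eval (φ 0) (p i) = 0) :
    ∀ i, ∀ t ∈ Icc (0 : ℝ) T, eval (φ t) (p i) = 0 := by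
  set y : ℝ → (Fin m → ℝ) := fun τ i => eval (φ τ) (p i) with hy
  -- derivative of y
  have hy' : ∀ t ∈ Ico (0:ℝ) T,
      HasDerivWithinAt y (fun i => eval (φ t) (lieD f (p i))) (Ici t) t := by
    intro t ht
    have hmem : Icc (0:ℝ) T ∈ nhdsWithin t (Ici t) := Icc_mem_nhdsGE_of_mem ht
    have hφ : HasDerivWithinAt φ (fun i => eval (φ t) (f i)) (Ici t) t :=
      (hsol t (Ico_subset_Icc_self ht)).mono_of_mem_nhdsWithin hmem
    exact hasDerivWithinAt_pi.2 fun i => lieD_chain hφ (p i)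
  -- continuity of φ and y on Icc
  have hφc : ContinuousOn φ (Icc (0:ℝ) T) := fun t ht =>
    (hsol t ht).continuousWithinAt
  have hyc : ContinuousOn y (Icc (0:ℝ) T) := by
    apply continuousOn_pi.2
    intro i
    exact (MvPolynomial.continuous_eval (p i)).comp_continuousOn hφc
  -- bound on G along the trajectory
  obtain ⟨C, hC⟩ : ∃ C : ℝ, ∀ t ∈ Icc (0:ℝ) T, ∀ i j, |eval (φ t) (G i j)| ≤ C := by
    have hc : ContinuousOn (fun t => (fun ij : Fin m × Fin m => eval (φ t) (G ij.1 ij.2))) (Icc (0:ℝ) T) := by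
      apply continuousOn_pi.2
      intro ij
      exact (MvPolynomial.continuous_eval (G ij.1 ij.2)).comp_continuousOn hφc
    obtain ⟨C, hC⟩ := (isCompact_Icc).exists_bound_of_continuousOn hc
    refine ⟨C, fun t ht i j => ?_⟩
    have h1 := hC t ht
    have h2 : ‖(fun ij : Fin m × Fin m => eval (φ t) (G ij.1 ij.2)) (i,j)‖
        ≤ ‖(fun ij : Fin m × Fin m => eval (φ t) (G ij.1 ij.2))‖ :=
      norm_le_pi_norm (fun ij : Fin m × Fin m => eval (φ t) (G ij.1 ij.2)) (i,j)
    calc |eval (φ t) (G i j)| = ‖(fun ij : Fin m × Fin m => eval (φ t) (G ij.1 ij.2)) (i,j)‖ := by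
          simp [Real.norm_eq_abs]
      _ ≤ ‖(fun ij : Fin m × Fin m => eval (φ t) (G ij.1 ij.2))‖ := h2
      _ ≤ C := h1
  set K : ℝ := m * max C 0 with hK
  have hK0 : 0 ≤ K := mul_nonneg (Nat.cast_nonneg m) (le_max_right _ _)
  -- norm bound on the derivative
  have hbound : ∀ t ∈ Ico (0:ℝ) T,
      ‖(fun i => eval (φ t) (lieD f (p i)))‖ ≤ K * ‖y t‖ + 0 := by
    intro t ht
    rw [add_zero]
    have htQ : φ t ∈ Q := hQ t (Ico_subset_Icc_self ht)
    have hKy : 0 ≤ K * ‖y t‖ := mul_nonneg hK0 (norm_nonneg _)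
    apply (pi_norm_le_iff_of_nonneg hKy).2
    intro i
    rw [hdbx _ htQ i]
    calc ‖∑ j, eval (φ t) (G i j) * eval (φ t) (p j)‖
        ≤ ∑ j, ‖eval (φ t) (G i j) * eval (φ t) (p j)‖ := norm_sum_le _ _
      _ ≤ ∑ j : Fin m, max C 0 * ‖y t‖ := by
          apply Finset.sum_le_sum
          intro j _
          rw [norm_mul]
          have h1 : ‖eval (φ t) (G i j)‖ ≤ max C 0 :=
            le_trans (by simpa [Real.norm_eq_abs] using hC t (Ico_subset_Icc_self ht) i j)
              (le_max_left _ _)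
          have h2 : ‖eval (φ t) (p j)‖ ≤ ‖y t‖ := by
            simpa [hy] using norm_le_pi_norm (y t) j
          exact mul_le_mul h1 h2 (norm_nonneg _) (le_max_right _ _)
      _ = K * ‖y t‖ := by
          rw [Finset.sum_const, Finset.card_univ, Fintype.card_fin, nsmul_eq_mul, hK, mul_assoc]
  -- initial condition
  have hy0 : ‖y 0‖ ≤ 0 := by
    have : y 0 = 0 := funext fun i => h0 i
    simp [this]
  -- Gronwall
  have hfin := norm_le_gronwallBound_of_norm_deriv_right_le hyc hy' hy0 hbound
  intro i t ht
  have := hfin t ht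
  rw [gronwallBound_ε0_δ0] at this
  have hzero : y t = 0 := norm_le_zero_iff.1 this
  exact congrFun hzero i
end

section
/- Completeness characterization of algebraic invariants (DRI): Let f be a polynomial vector field on ℝⁿ, let Q ⊆ ℝⁿ be open, let p be a polynomial, and let N ≥ 1 and polynomials g₀,…,g_{N−1} satisfy the polynomial identity L_f^N(p) = Σ_{i<N} gᵢ·L_f^i(p). Then for every ω ∈ ℝⁿ the following are equivalent: (a) for every T ≥ 0, every solution φ : [0,T] → ℝⁿ of x' = f(x) with φ(0) = ω and φ(t) ∈ Q for all t ∈ [0,T] satisfies p(φ(t)) = 0 for all t ∈ [0,T]; (b) if ω ∈ Q then L_f^i(p)(ω) = 0 for every i < N. -/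
open MvPolynomial Set

lemma hasDerivWithinAt_eval_comp {n : ℕ} {φ : ℝ → (Fin n → ℝ)} {v : Fin n → ℝ}
    {s : Set ℝ} {t : ℝ} (hφ : HasDerivWithinAt φ v s t) (q : MvPolynomial (Fin n) ℝ) :
    HasDerivWithinAt (fun u => eval (φ u) q)
      (∑ i, eval (φ t) (pderiv i q) * v i) s t := by
  induction q using MvPolynomial.induction_on with
  | C a => simpa using hasDerivWithinAt_const t s a
  | add p q hp hq =>
      simpa [add_mul, Finset.sum_add_distrib, Pi.add_def] using hp.add hq
  | mul_X p i hp =>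
      have hi : HasDerivWithinAt (fun u => φ u i) (v i) s t :=
        ((ContinuousLinearMap.proj (R := ℝ) (φ := fun _ : Fin n => ℝ) i).hasFDerivAt).comp_hasDerivWithinAt t hφ
      have h := hp.mul hi
      have key : (∑ j, eval (φ t) (pderiv j (p * X i)) * v j)
          = (∑ j, eval (φ t) (pderiv j p) * v j) * φ t i + eval (φ t) p * v i := by
        simp only [pderiv_mul, pderiv_X, map_add, map_mul, add_mul, Finset.sum_add_distrib,
          eval_X, Finset.sum_congr]
        congr 1
        · rw [Finset.sum_mul]
          exact Finset.sum_congr rfl fun j _ => by ring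
        · rw [Finset.sum_eq_single i] <;> simp +contextual [Pi.single_apply, eq_comm]
      rw [key]
      simpa [eval_X, mul_comm, Pi.mul_def] using h

lemma sol_deriv {n : ℕ} {f : Fin n → MvPolynomial (Fin n) ℝ} {T : ℝ} {φ : ℝ → (Fin n → ℝ)}
    (hφ : IsSol f T φ) (q : MvPolynomial (Fin n) ℝ) {t : ℝ} (ht : t ∈ Icc (0:ℝ) T) :
    HasDerivWithinAt (fun u => eval (φ u) q) (eval (φ t) (lieD f q)) (Icc (0:ℝ) T) t := by
  have h := hasDerivWithinAt_eval_comp (hφ t ht) q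
  convert h using 1
  simp [lieD, map_sum]

lemma sol_zero_iter {n : ℕ} {f : Fin n → MvPolynomial (Fin n) ℝ} {T : ℝ} (hT : 0 < T)
    {φ : ℝ → (Fin n → ℝ)} (hφ : IsSol f T φ)
    {p : MvPolynomial (Fin n) ℝ} (hp : ∀ t ∈ Icc (0:ℝ) T, eval (φ t) p = 0) :
    ∀ i, ∀ t ∈ Icc (0:ℝ) T, eval (φ t) ((lieD f)^[i] p) = 0 := by
  intro i
  induction i with
  | zero => simpa using hp
  | succ i ih =>
      intro t ht
      have h1 : HasDerivWithinAt (fun u => eval (φ u) ((lieD f)^[i] p))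
          (eval (φ t) (lieD f ((lieD f)^[i] p))) (Icc (0:ℝ) T) t := sol_deriv hφ _ ht
      have h2 : HasDerivWithinAt (fun u => eval (φ u) ((lieD f)^[i] p)) 0 (Icc (0:ℝ) T) t :=
        (hasDerivWithinAt_const t _ (0:ℝ)).congr ih (ih t ht)
      have hu : UniqueDiffWithinAt ℝ (Icc (0:ℝ) T) t := (uniqueDiffOn_Icc hT) t ht
      have := (h1.derivWithin hu).symm.trans (h2.derivWithin hu)
      rw [Function.iterate_succ_apply']
      exact this

/-- The linear companion vector field. -/
def vAux {N : ℕ} (c : ℝ → Fin N → ℝ) (u : ℝ) (z : Fin N → ℝ) (i : Fin N) : ℝ :=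
  if h : (i:ℕ)+1 < N then z ⟨(i:ℕ)+1, h⟩ else ∑ j, c u j * z j

lemma vAux_zero {N : ℕ} (c : ℝ → Fin N → ℝ) (u : ℝ) : vAux c u 0 = 0 := by
  funext i
  by_cases h : (i:ℕ)+1 < N <;> simp [vAux, h]

lemma vAux_lipschitz {N : ℕ} {c : ℝ → Fin N → ℝ} {C : ℝ}
    (hC : ∀ u, (∑ j, |c u j|) ≤ C) (u : ℝ) :
    LipschitzWith ⟨max 1 C, le_trans zero_le_one (le_max_left 1 C)⟩ (vAux c u) := by
  apply LipschitzWith.of_dist_le_mul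
  intro z z'
  have hK : (0:ℝ) ≤ max 1 C * dist z z' :=
    mul_nonneg (le_trans zero_le_one (le_max_left 1 C)) dist_nonneg
  change dist (vAux c u z) (vAux c u z') ≤ max 1 C * dist z z'
  rw [dist_pi_le_iff hK]
  intro i
  by_cases h : (i:ℕ)+1 < N
  · simp only [vAux, dif_pos h]
    calc dist (z ⟨(i:ℕ)+1, h⟩) (z' ⟨(i:ℕ)+1, h⟩) ≤ dist z z' := dist_le_pi_dist z z' _
      _ ≤ max 1 C * dist z z' := le_mul_of_one_le_left dist_nonneg (le_max_left 1 C)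
  · simp only [vAux, dif_neg h]
    calc dist (∑ j, c u j * z j) (∑ j, c u j * z' j)
        = |∑ j, c u j * (z j - z' j)| := by
          rw [Real.dist_eq, ← Finset.sum_sub_distrib]
          congr 1
          exact Finset.sum_congr rfl fun j _ => by ring
      _ ≤ ∑ j, |c u j * (z j - z' j)| := Finset.abs_sum_le_sum_abs _ _
      _ ≤ ∑ j, |c u j| * dist z z' := by
          refine Finset.sum_le_sum fun j _ => ?_
          rw [abs_mul]
          exact mul_le_mul_of_nonneg_left
            (le_trans (le_of_eq (Real.dist_eq (z j) (z' j)).symm) (dist_le_pi_dist z z' j))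
            (abs_nonneg _)
      _ = (∑ j, |c u j|) * dist z z' := (Finset.sum_mul _ _ _).symm
      _ ≤ max 1 C * dist z z' :=
          mul_le_mul_of_nonneg_right (le_trans (hC u) (le_max_right 1 C)) dist_nonneg

lemma backward {n N : ℕ} (hN : 1 ≤ N) (f : Fin n → MvPolynomial (Fin n) ℝ)
    (p : MvPolynomial (Fin n) ℝ) (g : ℕ → MvPolynomial (Fin n) ℝ)
    (hrank : (lieD f)^[N] p = ∑ i ∈ Finset.range N, g i * (lieD f)^[i] p)
    {T : ℝ} (hT : 0 ≤ T) {φ : ℝ → (Fin n → ℝ)} (hsol : IsSol f T φ)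
    (hz : ∀ i < N, eval (φ 0) ((lieD f)^[i] p) = 0) :
    ∀ t ∈ Icc (0:ℝ) T, eval (φ t) p = 0 := by
  set π : ℝ → ℝ := fun u => min (max u 0) T with hπdef
  have hπ : ∀ u, π u ∈ Icc (0:ℝ) T := fun u => ⟨le_min (le_max_right u 0) hT, min_le_right _ _⟩
  have hπt : ∀ t ∈ Icc (0:ℝ) T, π t = t := fun t ht => by
    simp only [hπdef, max_eq_left ht.1, min_eq_left ht.2]
  have hφc : ContinuousOn φ (Icc (0:ℝ) T) := fun t ht => (hsol t ht).continuousWithinAt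
  set c : ℝ → Fin N → ℝ := fun u j => eval (φ (π u)) (g j) with hcdef
  have hπcont : Continuous π := (continuous_id.max continuous_const).min continuous_const
  have hφπ : Continuous (fun u => φ (π u)) := hφc.comp_continuous hπcont hπ
  have hScont : Continuous (fun u => ∑ j : Fin N, |c u j|) := by
    apply continuous_finset_sum
    intro j _
    exact ((MvPolynomial.continuous_eval (g j)).comp hφπ).abs
  obtain ⟨C, hCb⟩ := isCompact_Icc.exists_bound_of_continuousOn
    (hScont.continuousOn : ContinuousOn (fun u => ∑ j : Fin N, |c u j|) (Icc (0:ℝ) T))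
  have hC : ∀ u, (∑ j, |c u j|) ≤ C := by
    intro u
    have h1 : π (π u) = π u := hπt _ (hπ u)
    have h2 := hCb (π u) (hπ u)
    have h3 : (∑ j : Fin N, |c (π u) j|) = ∑ j : Fin N, |c u j| := by
      simp only [hcdef, h1]
    rw [Real.norm_eq_abs, h3, abs_of_nonneg (Finset.sum_nonneg fun j _ => abs_nonneg _)] at h2
    exact h2
  set y : ℝ → Fin N → ℝ := fun u i => eval (φ u) ((lieD f)^[(i:ℕ)] p) with hydef
  have hycont : ContinuousOn y (Icc (0:ℝ) T) := by
    apply continuousOn_pi.mpr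
    intro i
    exact (MvPolynomial.continuous_eval ((lieD f)^[(i:ℕ)] p)).comp_continuousOn hφc
  have hy' : ∀ t ∈ Ico (0:ℝ) T, HasDerivWithinAt y (vAux c t (y t)) (Ici t) t := by
    intro t ht
    have htc : t ∈ Icc (0:ℝ) T := Ico_subset_Icc_self ht
    have comp : ∀ i : Fin N, HasDerivWithinAt (fun u => y u i)
        (eval (φ t) ((lieD f)^[(i:ℕ)+1] p)) (Icc (0:ℝ) T) t := by
      intro i
      have h := sol_deriv hsol ((lieD f)^[(i:ℕ)] p) htc
      rw [Function.iterate_succ_apply']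
      exact h
    have hder : HasDerivWithinAt y (fun i : Fin N => eval (φ t) ((lieD f)^[(i:ℕ)+1] p))
        (Icc (0:ℝ) T) t := hasDerivWithinAt_pi.mpr comp
    have heq : (fun i : Fin N => eval (φ t) ((lieD f)^[(i:ℕ)+1] p)) = vAux c t (y t) := by
      funext i
      by_cases h : (i:ℕ)+1 < N
      · simp [vAux, h, hydef]
      · have hi : (i:ℕ)+1 = N := by omega
        simp only [vAux]
        rw [dif_neg h, hi, hrank, map_sum,
          Finset.sum_range fun j => eval (φ t) (g j * (lieD f)^[j] p)]
        refine Finset.sum_congr rfl fun j _ => ?_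
        simp [hcdef, hydef, hπt t htc]
    exact (heq ▸ hder).mono_of_mem_nhdsWithin (Icc_mem_nhdsGE_of_mem ht)
  have huniq := ODE_solution_unique_of_mem_Icc_right
    (K := ⟨max 1 C, le_trans zero_le_one (le_max_left 1 C)⟩)
    (s := fun _ => (univ : Set (Fin N → ℝ)))
    (fun u _ => (vAux_lipschitz hC u).lipschitzOnWith)
    hycont hy' (fun _ _ => trivial)
    (continuousOn_const : ContinuousOn (fun _ : ℝ => (0 : Fin N → ℝ)) (Icc 0 T))
    (fun t _ => by
      rw [vAux_zero c t]
      exact hasDerivWithinAt_const t _ (0 : Fin N → ℝ))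
    (fun _ _ => trivial)
    (by
      funext i
      exact hz (i:ℕ) i.isLt)
  intro t ht
  have := congrFun (huniq ht) ⟨0, by omega⟩
  simpa [hydef] using this

/-- Completeness characterization of algebraic invariants (DRI). -/
theorem DRI_char {n : ℕ} (hn : 1 ≤ n) (f : Fin n → MvPolynomial (Fin n) ℝ)
    (Q : Set (Fin n → ℝ)) (hQ : IsOpen Q) (p : MvPolynomial (Fin n) ℝ)
    (N : ℕ) (hN : 1 ≤ N) (g : ℕ → MvPolynomial (Fin n) ℝ)
    (hrank : (lieD f)^[N] p = ∑ i ∈ Finset.range N, g i * (lieD f)^[i] p)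
    (ω : Fin n → ℝ) :
    (∀ T : ℝ, 0 ≤ T → ∀ φ : ℝ → (Fin n → ℝ), IsSol f T φ → φ 0 = ω →
        (∀ t ∈ Icc (0 : ℝ) T, φ t ∈ Q) → ∀ t ∈ Icc (0 : ℝ) T, eval (φ t) p = 0)
    ↔ (ω ∈ Q → ∀ i < N, eval ω ((lieD f)^[i] p) = 0) := by
  constructor
  · intro H hω i _
    -- construct a local solution through ω staying in Q
    have hv : ContDiff ℝ 1 (fun x : Fin n → ℝ => fun i => eval x (f i)) := by
      apply contDiff_pi.mpr
      intro i
      rw [contDiff_iff_contDiffAt]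
      intro x
      exact ((AnalyticOnNhd.eval_mvPolynomial (f i)) x (mem_univ x)).contDiffAt
    obtain ⟨ψ, hψ0, ε, hε, hψ⟩ :=
      ContDiffAt.exists_forall_mem_closedBall_exists_eq_forall_mem_Ioo_hasDerivAt₀ (hv.contDiffAt (x := ω)) (0:ℝ)
    have h0mem : (0:ℝ) ∈ Ioo (0 - ε) (0 + ε) := by constructor <;> linarith
    have hcont : ContinuousAt ψ 0 := (hψ 0 h0mem).continuousAt
    have hpre : ψ ⁻¹' Q ∈ nhds (0:ℝ) := hcont (hQ.mem_nhds (by rw [hψ0]; exact hω))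
    obtain ⟨δ, hδ, hball⟩ := Metric.mem_nhds_iff.mp hpre
    set T : ℝ := min (ε/2) (δ/2) with hTdef
    have hT : 0 < T := by positivity
    have hsolψ : IsSol f T ψ := by
      intro t ht
      have : t ∈ Ioo (0 - ε) (0 + ε) := by
        have h1 := ht.1; have h2 := ht.2
        have := min_le_left (ε/2) (δ/2)
        constructor <;> [linarith; linarith]
      exact (hψ t this).hasDerivWithinAt
    have hmemQ : ∀ t ∈ Icc (0:ℝ) T, ψ t ∈ Q := by
      intro t ht
      apply hball
      have h1 := ht.1; have h2 := ht.2
      have := min_le_right (ε/2) (δ/2)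
      simp only [Metric.mem_ball, Real.dist_eq, sub_zero]
      rw [abs_of_nonneg h1]; linarith
    have hH := H T hT.le ψ hsolψ hψ0 hmemQ
    have := sol_zero_iter hT hsolψ hH i 0 ⟨le_refl 0, hT.le⟩
    rwa [hψ0] at this
  · intro hb T hT φ hsol hφ0 hmem t ht
    have hωQ : ω ∈ Q := hφ0 ▸ hmem 0 ⟨le_refl 0, hT⟩
    have hz : ∀ i < N, eval (φ 0) ((lieD f)^[i] p) = 0 := by
      rw [hφ0]; exact hb hωQ
    exact backward hN f p g hrank hT hsol hz t ht
end

section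
/- Liouville's formula for derivations: Let R be a commutative ring, let d : R → R be an additive map satisfying the Leibniz rule d(ab) = d(a)·b + a·d(b) for all a, b ∈ R, and let A and B be m×m matrices over R such that applying d entrywise to A yields the matrix product B·A (i.e., d(A_{ij}) = Σ_k B_{ik}·A_{kj} for all i, j). Then d(det A) = trace(B)·det A. -/
theorem liouville_aux_prod {R : Type*} [CommRing R] (d : R → R)
    (hadd : ∀ a b : R, d (a + b) = d a + d b)
    (hleibniz : ∀ a b : R, d (a * b) = d a * b + a * d b)
    {ι : Type*} [DecidableEq ι] (s : Finset ι) (f : ι → R) :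
    d (∏ i ∈ s, f i) = ∑ i ∈ s, d (f i) * ∏ j ∈ s.erase i, f j := by
  have h1 : d 1 = 0 := by
    have h : d 1 = d 1 + d 1 := by simpa using hleibniz 1 1
    exact (left_eq_add.mp h)
  induction s using Finset.induction_on with
  | empty => simpa using h1
  | @insert a s ha ih =>
    rw [Finset.prod_insert ha, hleibniz, ih, Finset.sum_insert ha,
      Finset.erase_insert ha, Finset.mul_sum]
    congr 1
    refine Finset.sum_congr rfl fun i hi => ?_
    rw [Finset.erase_insert_of_ne (by rintro rfl; exact ha hi),
      Finset.prod_insert (fun h => ha (Finset.mem_of_mem_erase h))]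
    ring

/-- Liouville's formula for derivations: if the entrywise derivative of `A`
is `B * A`, then `d (det A) = trace B * det A`. -/
theorem liouville_derivation {R : Type*} [CommRing R] (d : R → R)
    (hadd : ∀ a b : R, d (a + b) = d a + d b)
    (hleibniz : ∀ a b : R, d (a * b) = d a * b + a * d b)
    (m : ℕ) (A B : Matrix (Fin m) (Fin m) R)
    (hAB : ∀ i j, d (A i j) = ∑ k, B i k * A k j) :
    d A.det = B.trace * A.det := by
  have h0 : d 0 = 0 := by
    have h : d 0 = d 0 + d 0 := by simpa using hadd 0 0
    exact (left_eq_add.mp h)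
  have hneg : ∀ a : R, d (-a) = - d a := by
    intro a
    have h : d a + d (-a) = 0 := by
      have := hadd a (-a); simp [h0] at this; linear_combination -this
    linear_combination h
  have hsum : ∀ {ι : Type} (s : Finset ι) (f : ι → R),
      d (∑ i ∈ s, f i) = ∑ i ∈ s, d (f i) := by
    intro ι s f
    induction s using Finset.cons_induction with
    | empty => simpa using h0
    | cons a s ha ih => rw [Finset.sum_cons, hadd, ih, Finset.sum_cons]
  -- Step 1: d(det A) = ∑ i, det of A with row i replaced by derivative of row i
  have key : d A.det = ∑ i, (A.updateRow i (fun j => d (A i j))).det := by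
    rw [← Matrix.det_transpose A, Matrix.det_apply', hsum]
    simp only [Matrix.transpose_apply]
    have hstep : ∀ σ : Equiv.Perm (Fin m),
        d (((Equiv.Perm.sign σ : ℤ) : R) * ∏ i, A i (σ i)) =
        ∑ i, ((Equiv.Perm.sign σ : ℤ) : R) *
          (d (A i (σ i)) * ∏ j ∈ Finset.univ.erase i, A j (σ j)) := by
      intro σ
      rcases Int.units_eq_one_or (Equiv.Perm.sign σ) with h | h <;>
        simp [h, neg_one_mul, hneg, liouville_aux_prod d hadd hleibniz,
          Finset.sum_neg_distrib]
    rw [Finset.sum_congr rfl fun σ _ => hstep σ, Finset.sum_comm]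
    refine Finset.sum_congr rfl fun i _ => ?_
    rw [← Matrix.det_transpose, Matrix.det_apply']
    simp only [Matrix.transpose_apply]
    refine Finset.sum_congr rfl fun σ _ => ?_
    congr 1
    rw [← Finset.mul_prod_erase _ _ (Finset.mem_univ i), Matrix.updateRow_self]
    congr 1
    refine Finset.prod_congr rfl fun j hj => ?_
    rw [Matrix.updateRow_ne (Finset.ne_of_mem_erase hj)]
  rw [key]
  have hdet : ∀ i, (A.updateRow i (fun j => d (A i j))).det = B i i * A.det := by
    intro i
    have hrow : (fun j => d (A i j)) = ∑ k, B i k • A k := by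
      funext j
      simp [hAB i j, Finset.sum_apply]
    rw [hrow, Matrix.det_updateRow_sum, smul_eq_mul]
  rw [Finset.sum_congr rfl fun i _ => hdet i, ← Finset.sum_mul, Matrix.trace]
  rfl
end

section
/- Real induction principle: Let a ≤ b be real numbers and let S be a subset of the closed interval [a,b]. Then S is inductive if and only if S = [a,b]. -/
open Set

/-- Real induction principle: a subset `S ⊆ [a,b]` is inductive
iff `S = [a,b]`. -/
theorem real_induction (a b : ℝ) (hab : a ≤ b) (S : Set ℝ) (hS : S ⊆ Icc a b) :
    (∀ x ∈ Icc a b, Ico a x ⊆ S →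
        x ∈ S ∧ (x < b → ∃ ε > 0, Icc x (x + ε) ⊆ S))
    ↔ S = Icc a b := by
  constructor
  · intro h
    by_contra hne
    have hne' : (Icc a b \ S).Nonempty :=
      Set.sdiff_nonempty.mpr fun hsub => hne (Subset.antisymm hS hsub)
    set T := Icc a b \ S with hT
    set c := sInf T with hc
    have hbdd : BddBelow T := ⟨a, fun t ht => ht.1.1⟩
    have hca : a ≤ c := le_csInf hne' fun t ht => ht.1.1
    have hcb : c ≤ b := by
      obtain ⟨t, ht⟩ := hne'
      exact (csInf_le hbdd ht).trans ht.1.2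
    have hIco : Ico a c ⊆ S := by
      intro x hx
      by_contra hxS
      have hxT : x ∈ T := ⟨⟨hx.1, hx.2.le.trans hcb⟩, hxS⟩
      exact absurd (csInf_le hbdd hxT) (not_le.mpr hx.2)
    obtain ⟨hcS, hstep⟩ := h c ⟨hca, hcb⟩ hIco
    rcases eq_or_lt_of_le hcb with heq | hlt
    · obtain ⟨t, ht⟩ := hne'
      have h1 : c ≤ t := csInf_le hbdd ht
      have h2 : t = c := le_antisymm (ht.1.2.trans heq.ge) h1
      exact ht.2 (h2 ▸ hcS)
    · obtain ⟨ε, hε, hsub⟩ := hstep hlt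
      have hlb : c + ε ≤ c := le_csInf hne' fun t ht => by
        by_contra hlt'
        push_neg at hlt'
        exact ht.2 (hsub ⟨csInf_le hbdd ht, hlt'.le⟩)
      linarith
  · rintro rfl
    intro x hx _
    refine ⟨hx, fun hxb => ⟨b - x, by linarith, fun y hy => ⟨?_, ?_⟩⟩⟩
    · linarith [hx.1, hy.1]
    · linarith [hy.2]
end

section
/- Soundness of the uniqueness axiom (Uniq): Let f be a polynomial vector field on ℝⁿ, let Q₁, Q₂, P₁, P₂ ⊆ ℝⁿ, and let φ₁ : [0,T₁] → ℝⁿ and φ₂ : [0,T₂] → ℝⁿ be solutions of x' = f(x) with φ₁(0) = φ₂(0), such that φ₁(t) ∈ Q₁ for all t ∈ [0,T₁], φ₂(t) ∈ Q₂ for all t ∈ [0,T₂], φ₁(T₁) ∈ P₁, and φ₂(T₂) ∈ P₂. Then there exist T ≥ 0 and a solution φ : [0,T] → ℝⁿ of x' = f(x) with φ(0) = φ₁(0), φ(t) ∈ Q₁ ∩ Q₂ for all t ∈ [0,T], and φ(T) ∈ P₁ ∪ P₂. -/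
open MvPolynomial Set

/-- The polynomial vector field as a map `ℝⁿ → ℝⁿ`. -/
noncomputable def Fvec {n : ℕ} (f : Fin n → MvPolynomial (Fin n) ℝ) :
    (Fin n → ℝ) → (Fin n → ℝ) := fun x i => eval x (f i)

lemma Fvec_contDiff {n : ℕ} (f : Fin n → MvPolynomial (Fin n) ℝ) :
    ContDiff ℝ ⊤ (Fvec f) := by
  apply contDiff_pi.2
  intro i
  have h := AnalyticOnNhd.eval_mvPolynomial (𝕜 := ℝ) (σ := Fin n) (f i)
  exact contDiff_iff_contDiffAt.2 fun x => (h x trivial).contDiffAt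

/-- Uniqueness: two solutions with the same initial value agree on `[0, T₁]` when `T₁ ≤ T₂`. -/
lemma sol_unique {n : ℕ} (f : Fin n → MvPolynomial (Fin n) ℝ)
    {T₁ T₂ : ℝ} (hT₁ : 0 ≤ T₁) (hle : T₁ ≤ T₂)
    {φ₁ φ₂ : ℝ → (Fin n → ℝ)} (h₁ : IsSol f T₁ φ₁) (h₂ : IsSol f T₂ φ₂)
    (h0 : φ₁ 0 = φ₂ 0) : EqOn φ₁ φ₂ (Icc 0 T₁) := by
  have hT₂ : (0:ℝ) ≤ T₂ := le_trans hT₁ hle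
  have hc₁ : ContinuousOn φ₁ (Icc 0 T₁) := fun t ht => (h₁ t ht).continuousWithinAt
  have hc₂ : ContinuousOn φ₂ (Icc 0 T₂) := fun t ht => (h₂ t ht).continuousWithinAt
  -- bounded images
  obtain ⟨r₁, hr₁⟩ := ((isCompact_Icc.image_of_continuousOn hc₁).isBounded).subset_closedBall 0
  obtain ⟨r₂, hr₂⟩ := ((isCompact_Icc.image_of_continuousOn hc₂).isBounded).subset_closedBall 0
  set R : ℝ := max r₁ r₂ with hR
  have hs₁ : ∀ t ∈ Icc (0:ℝ) T₁, φ₁ t ∈ Metric.closedBall (0 : Fin n → ℝ) R :=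
    fun t ht => Metric.closedBall_subset_closedBall (le_max_left _ _) (hr₁ ⟨t, ht, rfl⟩)
  have hs₂ : ∀ t ∈ Icc (0:ℝ) T₂, φ₂ t ∈ Metric.closedBall (0 : Fin n → ℝ) R :=
    fun t ht => Metric.closedBall_subset_closedBall (le_max_right _ _) (hr₂ ⟨t, ht, rfl⟩)
  -- Lipschitz constant on the ball
  have hcd := Fvec_contDiff f
  have hdf : Differentiable ℝ (Fvec f) := hcd.differentiable (by simp)
  have hfc : Continuous (fderiv ℝ (Fvec f)) := (hcd.fderiv_right (m := ⊤) le_top).continuous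
  obtain ⟨C, hC⟩ := (isCompact_closedBall (0 : Fin n → ℝ) R).exists_bound_of_continuousOn
    hfc.continuousOn
  have hlip : LipschitzOnWith C.toNNReal (Fvec f) (Metric.closedBall 0 R) := by
    apply Convex.lipschitzOnWith_of_nnnorm_fderiv_le (fun x _ => hdf x) _
      (convex_closedBall _ _)
    intro x hx
    have : ‖fderiv ℝ (Fvec f) x‖ ≤ C := hC x hx
    rw [← NNReal.coe_le_coe, coe_nnnorm, Real.coe_toNNReal']
    exact le_max_of_le_left this
  -- apply uniqueness
  have key := ODE_solution_unique_of_mem_Icc_right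
    (v := fun _ : ℝ => Fvec f) (s := fun _ : ℝ => Metric.closedBall (0 : Fin n → ℝ) R)
    (fun _ _ => hlip) hc₁
    (fun t ht => ((h₁ t ⟨ht.1, le_of_lt ht.2⟩).mono_of_mem_nhdsWithin ?_))
    (fun t ht => hs₁ t ⟨ht.1, le_of_lt ht.2⟩)
    (hc₂.mono (Icc_subset_Icc le_rfl hle))
    (fun t ht => ((h₂ t ⟨ht.1, le_trans (le_of_lt ht.2) hle⟩).mono_of_mem_nhdsWithin ?_))
    (fun t ht => hs₂ t ⟨ht.1, le_trans (le_of_lt ht.2) hle⟩)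
    h0
  · exact key
  · exact Filter.mem_of_superset (Icc_mem_nhdsGE_of_mem ⟨le_refl t, ht.2⟩)
      (Icc_subset_Icc ht.1 le_rfl)
  · exact Filter.mem_of_superset (Icc_mem_nhdsGE_of_mem ⟨le_refl t, lt_of_lt_of_le ht.2 hle⟩)
      (Icc_subset_Icc ht.1 le_rfl)

/-- Soundness of the uniqueness axiom (Uniq). -/
theorem uniq_sound {n : ℕ} (hn : 1 ≤ n) (f : Fin n → MvPolynomial (Fin n) ℝ)
    (Q₁ Q₂ P₁ P₂ : Set (Fin n → ℝ))
    (T₁ T₂ : ℝ) (hT₁ : 0 ≤ T₁) (hT₂ : 0 ≤ T₂)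
    (φ₁ φ₂ : ℝ → (Fin n → ℝ)) (h₁ : IsSol f T₁ φ₁) (h₂ : IsSol f T₂ φ₂)
    (h0 : φ₁ 0 = φ₂ 0)
    (hQ₁ : ∀ t ∈ Icc (0 : ℝ) T₁, φ₁ t ∈ Q₁) (hQ₂ : ∀ t ∈ Icc (0 : ℝ) T₂, φ₂ t ∈ Q₂)
    (hP₁ : φ₁ T₁ ∈ P₁) (hP₂ : φ₂ T₂ ∈ P₂) :
    ∃ T : ℝ, 0 ≤ T ∧ ∃ φ : ℝ → (Fin n → ℝ), IsSol f T φ ∧ φ 0 = φ₁ 0 ∧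
      (∀ t ∈ Icc (0 : ℝ) T, φ t ∈ Q₁ ∩ Q₂) ∧ φ T ∈ P₁ ∪ P₂ := by
  rcases le_total T₁ T₂ with hle | hle
  · have heq := sol_unique f hT₁ hle h₁ h₂ h0
    refine ⟨T₁, hT₁, φ₁, h₁, rfl, fun t ht => ⟨hQ₁ t ht, ?_⟩, Or.inl hP₁⟩
    rw [heq ht]
    exact hQ₂ t ⟨ht.1, le_trans ht.2 hle⟩
  · have heq := sol_unique f hT₂ hle h₂ h₁ h0.symm
    refine ⟨T₂, hT₂, φ₂, h₂, h0.symm, fun t ht => ⟨?_, hQ₂ t ht⟩, Or.inr hP₂⟩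
    rw [heq ht]
    exact hQ₁ t ⟨ht.1, le_trans ht.2 hle⟩
end

section
/- Soundness of the continuous existence axiom (Cont): Let f be a polynomial vector field on ℝⁿ with induced map F, let p be a polynomial, and let ω ∈ ℝⁿ satisfy p(ω) > 0 and F(ω) ≠ 0. Then there exist T > 0 and a solution φ : [0,T] → ℝⁿ of x' = f(x) with φ(0) = ω, φ(T) ≠ ω, and p(φ(t)) > 0 for all t ∈ [0,T]. -/
open MvPolynomial Set

lemma contDiff_mv_eval {n : ℕ} (p : MvPolynomial (Fin n) ℝ) :
    ContDiff ℝ 1 (fun x : Fin n → ℝ => eval x p) := by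
  induction p using MvPolynomial.induction_on with
  | C a => simpa using contDiff_const
  | add p q hp hq => simpa using hp.add hq
  | mul_X q i hq => simpa using hq.mul (contDiff_pi.mp contDiff_id i)

/-- Soundness of the continuous existence axiom (Cont). -/
theorem cont_sound {n : ℕ} (hn : 1 ≤ n) (f : Fin n → MvPolynomial (Fin n) ℝ)
    (p : MvPolynomial (Fin n) ℝ) (ω : Fin n → ℝ)
    (hp : 0 < eval ω p) (hF : (fun i => eval ω (f i)) ≠ (0 : Fin n → ℝ)) :
    ∃ T : ℝ, 0 < T ∧ ∃ φ : ℝ → (Fin n → ℝ), IsSol f T φ ∧ φ 0 = ω ∧ φ T ≠ ω ∧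
      ∀ t ∈ Icc (0 : ℝ) T, 0 < eval (φ t) p := by
  -- the vector field
  set v : (Fin n → ℝ) → (Fin n → ℝ) := fun x i => eval x (f i) with hv
  have hvc : ContDiff ℝ 1 v := contDiff_pi.mpr fun i => contDiff_mv_eval (f i)
  obtain ⟨φ, hφ0, ε, hε, hφ⟩ :=
    (hvc.contDiffAt (x := ω)).exists_forall_mem_closedBall_exists_eq_forall_mem_Ioo_hasDerivAt₀ (0 : ℝ)
  simp only [zero_sub, zero_add] at hφ
  -- coordinate with nonzero vector field value
  obtain ⟨i, hi⟩ : ∃ i, eval ω (f i) ≠ 0 := by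
    by_contra h
    push_neg at h
    exact hF (funext h)
  -- continuity of auxiliary functions at 0
  have hφcont : ContinuousAt φ 0 :=
    (hφ 0 ⟨by linarith, hε⟩).continuousAt
  have h1 : ContinuousAt (fun t => eval (φ t) p) 0 :=
    ((contDiff_mv_eval p).continuous.continuousAt).comp hφcont
  have h2 : ContinuousAt (fun t => eval (φ t) (f i)) 0 :=
    ((contDiff_mv_eval (f i)).continuous.continuousAt).comp hφcont
  have h1' : ∀ᶠ t in nhds (0 : ℝ), 0 < eval (φ t) p := by
    have := continuousAt_const.eventually_lt h1 (by simpa [hφ0] using hp)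
    filter_upwards [this] with t ht using ht
  have h2' : ∀ᶠ t in nhds (0 : ℝ), eval (φ t) (f i) ≠ 0 := by
    have : eval (φ 0) (f i) ≠ 0 := by simpa [hφ0] using hi
    exact h2.eventually_ne this
  obtain ⟨δ, hδ, hδ'⟩ := Metric.eventually_nhds_iff.mp (h1'.and h2')
  -- choose T
  set T : ℝ := min (ε / 2) (δ / 2) with hT
  have hT0 : 0 < T := lt_min (by linarith) (by linarith)
  have hTδ : ∀ t ∈ Icc (0 : ℝ) T, dist t 0 < δ := by
    intro t ht
    rw [Real.dist_eq, sub_zero, abs_of_nonneg ht.1]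
    calc t ≤ T := ht.2
    _ ≤ δ / 2 := min_le_right _ _
    _ < δ := by linarith
  have hsub : Icc (0 : ℝ) T ⊆ Ioo (-ε) ε := by
    intro t ht
    constructor
    · linarith [ht.1]
    · calc t ≤ T := ht.2
      _ ≤ ε / 2 := min_le_left _ _
      _ < ε := by linarith
  refine ⟨T, hT0, φ, ?_, hφ0, ?_, ?_⟩
  · intro t ht
    exact (hφ t (hsub ht)).hasDerivWithinAt
  · -- φ T ≠ ω via MVT on coordinate i
    intro hTeq
    have hcont : ContinuousOn (fun t => φ t i) (Icc 0 T) := by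
      intro t ht
      exact (((continuous_apply i).continuousAt.comp
        (hφ t (hsub ht)).continuousAt).continuousWithinAt)
    obtain ⟨c, hc, hcslope⟩ := exists_hasDerivAt_eq_slope (fun t => φ t i)
      (fun t => eval (φ t) (f i)) hT0 hcont
      (fun t ht => hasDerivAt_pi.mp (hφ t (hsub (Ioo_subset_Icc_self ht))) i)
    have hcne : eval (φ c) (f i) ≠ 0 :=
      (hδ' (hTδ c (Ioo_subset_Icc_self hc))).2
    rw [hTeq, hφ0] at hcslope
    simp at hcslope
    exact hcne hcslope
  · intro t ht
    exact (hδ' (hTδ t ht)).1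
end

section
/- Soundness of the real induction axiom for ODEs (RI): Let f be a polynomial vector field on ℝⁿ whose induced map F never vanishes (F(x) ≠ 0 for all x ∈ ℝⁿ, as is ensured e.g. by a clock equation x₁' = 1), and let P ⊆ ℝⁿ. For every ω ∈ ℝⁿ the following are equivalent: (a) for every T ≥ 0, every solution φ : [0,T] → ℝⁿ of x' = f(x) with φ(0) = ω satisfies φ(t) ∈ P for all t ∈ [0,T]; (b) for every T ≥ 0 and every solution φ : [0,T] → ℝⁿ of x' = f(x) with φ(0) = ω such that φ(t) ∈ P ∪ {φ(T)} for all t ∈ [0,T], one has both φ(T) ∈ P and there exist S > 0 and a solution ψ : [0,S] → ℝⁿ of x' = f(x) with ψ(0) = φ(T), ψ(s) ∈ P for all s ∈ [0,S], and ψ(S) ≠ φ(T). -/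
open MvPolynomial Set

namespace RIaux
open Metric NNReal
variable {n : ℕ}

noncomputable def Fv (f : Fin n → MvPolynomial (Fin n) ℝ) : (Fin n → ℝ) → (Fin n → ℝ) :=
  fun x i => eval x (f i)

lemma contDiff_eval_poly (p : MvPolynomial (Fin n) ℝ) :
    ContDiff ℝ 1 fun x : Fin n → ℝ => eval x p := by
  induction p using MvPolynomial.induction_on with
  | C a => simpa using contDiff_const (c := a)
  | add p q hp hq =>
      have : (fun x : Fin n → ℝ => eval x (p + q)) = fun x => eval x p + eval x q := by
        funext x; simp
      rw [this]; exact hp.add hq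
  | mul_X p i hp =>
      have : (fun x : Fin n → ℝ => eval x (p * X i)) = fun x => eval x p * x i := by
        funext x; simp
      rw [this]; exact hp.mul (contDiff_apply ℝ ℝ i)

lemma contDiff_Fv (f : Fin n → MvPolynomial (Fin n) ℝ) : ContDiff ℝ 1 (Fv f) :=
  contDiff_pi.mpr fun i => contDiff_eval_poly (f i)

lemma hasDerivWithinAt_nmem {g : ℝ → Fin n → ℝ} {s : Set ℝ} {x : ℝ} (d : Fin n → ℝ)
    (h : x ∉ closure s) : HasDerivWithinAt g d s x := by
  have := HasFDerivWithinAt.of_notMem_closure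
    (f := g) (f' := ContinuousLinearMap.toSpanSingleton ℝ d) (x := x) (s := s) h
  simpa [hasDerivWithinAt_iff_hasFDerivWithinAt] using this

variable {f : Fin n → MvPolynomial (Fin n) ℝ}

lemma isSol_iff (T : ℝ) (φ : ℝ → Fin n → ℝ) :
    IsSol f T φ ↔ ∀ t ∈ Icc (0:ℝ) T, HasDerivWithinAt φ (Fv f (φ t)) (Icc (0:ℝ) T) t :=
  Iff.rfl

lemma isSol_mono {T S : ℝ} {φ : ℝ → Fin n → ℝ} (h : IsSol f T φ) (hS : S ≤ T) :
    IsSol f S φ := fun t ht =>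
  (h t ⟨ht.1, ht.2.trans hS⟩).mono (Icc_subset_Icc le_rfl hS)

lemma exists_sol_from (f : Fin n → MvPolynomial (Fin n) ℝ) (x₀ : Fin n → ℝ) :
    ∃ S > (0:ℝ), ∃ ψ : ℝ → Fin n → ℝ, IsSol f S ψ ∧ ψ 0 = x₀ := by
  obtain ⟨g, hg0, ε, hε, hg⟩ :=
    (contDiff_Fv f).contDiffAt.exists_forall_mem_closedBall_exists_eq_forall_mem_Ioo_hasDerivAt₀ (x₀ := x₀) (0 : ℝ)
  refine ⟨ε/2, by linarith, g, fun t ht => ?_, hg0⟩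
  have : t ∈ Ioo (0 - ε) (0 + ε) := ⟨by linarith [ht.1], by linarith [ht.2]⟩
  exact (hg t this).hasDerivWithinAt

lemma isSol_concat {T S : ℝ} (hT : 0 ≤ T) (hS : 0 ≤ S) {φ ψ : ℝ → Fin n → ℝ}
    (hφ : IsSol f T φ) (hψ : IsSol f S ψ) (hjoin : ψ 0 = φ T) :
    IsSol f (T + S) (fun t => if t ≤ T then φ t else ψ (t - T)) := by
  set χ : ℝ → Fin n → ℝ := fun t => if t ≤ T then φ t else ψ (t - T) with hχdef
  have hTS : T ≤ T + S := le_add_of_nonneg_right hS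
  have hsplit : Icc (0:ℝ) T ∪ Icc T (T + S) = Icc 0 (T + S) := Icc_union_Icc_eq_Icc hT hTS
  have hχφ : ∀ u ∈ Icc (0:ℝ) T, χ u = φ u := fun u hu => if_pos hu.2
  have hχψ : ∀ u ∈ Icc T (T + S), χ u = ψ (u - T) := by
    intro u hu
    by_cases h : u ≤ T
    · have : u = T := le_antisymm h hu.1
      simp [hχdef, this, hjoin]
    · simp [hχdef, h]
  intro t ht
  have hleft : HasDerivWithinAt χ (Fv f (χ t)) (Icc 0 T) t := by
    by_cases h : t ≤ T
    · have htT : t ∈ Icc (0:ℝ) T := ⟨ht.1, h⟩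
      have := (hφ t htT).congr hχφ (hχφ t htT)
      rwa [← hχφ t htT] at this
    · exact hasDerivWithinAt_nmem _ (by
        rw [closure_Icc]; exact fun hc => h hc.2)
  have hright : HasDerivWithinAt χ (Fv f (χ t)) (Icc T (T + S)) t := by
    by_cases h : T ≤ t
    · have htT : t ∈ Icc T (T + S) := ⟨h, ht.2⟩
      have hu : t - T ∈ Icc (0:ℝ) S := ⟨by linarith [htT.1], by linarith [htT.2]⟩
      have hout := hψ (t - T) hu
      have hin : HasDerivWithinAt (fun u : ℝ => u - T) 1 (Icc T (T + S)) t :=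
        ((hasDerivAt_id t).sub_const T).hasDerivWithinAt
      have hmaps : MapsTo (fun u : ℝ => u - T) (Icc T (T + S)) (Icc 0 S) := by
        intro u hu
        simp only [mem_Icc] at hu ⊢
        constructor <;> linarith
      have hcomp := hout.scomp t hin hmaps
      rw [one_smul] at hcomp
      have : HasDerivWithinAt χ (Fv f (ψ (t - T))) (Icc T (T + S)) t :=
        hcomp.congr hχψ (hχψ t htT)
      rwa [← hχψ t htT] at this
    · exact hasDerivWithinAt_nmem _ (by
        rw [closure_Icc]; exact fun hc => h hc.1)
  have := hleft.union hright
  rwa [hsplit] at this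

lemma exists_escape (hF : ∀ x, Fv f x ≠ 0) {S : ℝ} (hS : 0 < S) {ψ : ℝ → Fin n → ℝ}
    (hψ : IsSol f S ψ) : ∃ s ∈ Ioc (0:ℝ) S, ψ s ≠ ψ 0 := by
  by_contra h
  push_neg at h
  have hconst : ∀ s ∈ Icc (0:ℝ) S, ψ s = ψ 0 := by
    intro s hs
    rcases eq_or_lt_of_le hs.1 with h0 | h0
    · rw [← h0]
    · exact h s ⟨h0, hs.2⟩
  have h1 : HasDerivWithinAt ψ (Fv f (ψ 0)) (Icc 0 S) 0 := hψ 0 ⟨le_rfl, hS.le⟩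
  have h2 : HasDerivWithinAt ψ 0 (Icc 0 S) 0 :=
    (hasDerivWithinAt_const 0 _ (ψ 0)).congr hconst (hconst 0 ⟨le_rfl, hS.le⟩)
  have hu : UniqueDiffWithinAt ℝ (Icc (0:ℝ) S) 0 :=
    (uniqueDiffOn_Icc hS) 0 ⟨le_rfl, hS.le⟩
  exact hF (ψ 0) (hu.eq_deriv _ h1 h2)

lemma sol_unique {S : ℝ} {ψ χ : ℝ → Fin n → ℝ}
    (hψ : IsSol f S ψ) (hχ : IsSol f S χ) (h0 : ψ 0 = χ 0) : EqOn ψ χ (Icc 0 S) := by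
  rcases lt_or_ge S 0 with h | hS
  · intro t ht; exact absurd (ht.1.trans ht.2) (not_le.mpr h)
  have hcψ : ContinuousOn ψ (Icc 0 S) := fun t ht => (hψ t ht).continuousWithinAt
  have hcχ : ContinuousOn χ (Icc 0 S) := fun t ht => (hχ t ht).continuousWithinAt
  have hcomp : IsCompact (ψ '' Icc 0 S ∪ χ '' Icc 0 S) :=
    ((isCompact_Icc.image_of_continuousOn hcψ).union
      (isCompact_Icc.image_of_continuousOn hcχ))
  obtain ⟨M, hM⟩ := hcomp.isBounded.subset_closedBall (0 : Fin n → ℝ)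
  obtain ⟨C, hC⟩ := (isCompact_closedBall (0 : Fin n → ℝ) M).exists_bound_of_continuousOn
    ((contDiff_Fv f).continuous_fderiv one_ne_zero).continuousOn
  set K : ℝ≥0 := ⟨max C 0, le_max_right _ _⟩ with hK
  have hlip : LipschitzOnWith K (Fv f) (closedBall 0 M) := by
    apply (convex_closedBall _ _).lipschitzOnWith_of_nnnorm_hasFDerivWithin_le
      (f' := fun x => fderiv ℝ (Fv f) x)
      (fun x _ => (((contDiff_Fv f).differentiable one_ne_zero) x).hasFDerivAt.hasFDerivWithinAt)
    intro x hx
    rw [← NNReal.coe_le_coe]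
    exact (hC x hx).trans (le_max_left _ _)
  have key : ∀ (g : ℝ → Fin n → ℝ), IsSol f S g →
      ∀ t ∈ Ico (0:ℝ) S, HasDerivWithinAt g (Fv f (g t)) (Ici t) t := by
    intro g hg t ht
    refine (hg t (Ico_subset_Icc_self ht)).mono_of_mem_nhdsWithin ?_
    exact mem_nhdsWithin.mpr ⟨Iio S, isOpen_Iio, ht.2,
      fun u hu => ⟨ht.1.trans hu.2, hu.1.le⟩⟩
  exact ODE_solution_unique_of_mem_Icc_right (v := fun _ => Fv f)
    (s := fun _ => closedBall 0 M) (fun _ _ => hlip)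
    hcψ (key ψ hψ)
    (fun t ht => hM (Or.inl (mem_image_of_mem _ (Ico_subset_Icc_self ht))))
    hcχ (key χ hχ)
    (fun t ht => hM (Or.inr (mem_image_of_mem _ (Ico_subset_Icc_self ht))))
    h0

end RIaux

/-- Soundness of the real induction axiom for ODEs (RI). -/
theorem realInd_ODE_sound {n : ℕ} (hn : 1 ≤ n) (f : Fin n → MvPolynomial (Fin n) ℝ)
    (hF : ∀ x : Fin n → ℝ, (fun i => eval x (f i)) ≠ (0 : Fin n → ℝ))
    (P : Set (Fin n → ℝ)) (ω : Fin n → ℝ) :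
    (∀ T : ℝ, 0 ≤ T → ∀ φ : ℝ → (Fin n → ℝ), IsSol f T φ → φ 0 = ω →
        ∀ t ∈ Icc (0 : ℝ) T, φ t ∈ P)
    ↔ (∀ T : ℝ, 0 ≤ T → ∀ φ : ℝ → (Fin n → ℝ), IsSol f T φ → φ 0 = ω →
        (∀ t ∈ Icc (0 : ℝ) T, φ t ∈ P ∪ {φ T}) →
        φ T ∈ P ∧ ∃ S : ℝ, 0 < S ∧ ∃ ψ : ℝ → (Fin n → ℝ), IsSol f S ψ ∧
          ψ 0 = φ T ∧ (∀ s ∈ Icc (0 : ℝ) S, ψ s ∈ P) ∧ ψ S ≠ φ T) := by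
  have hFv : ∀ x : Fin n → ℝ, RIaux.Fv f x ≠ 0 := hF
  constructor
  · intro ha T hT φ hφ hφ0 _
    have hPT : φ T ∈ P := ha T hT φ hφ hφ0 T ⟨hT, le_rfl⟩
    obtain ⟨S₀, hS₀, ψ, hψ, hψ0⟩ := RIaux.exists_sol_from f (φ T)
    set χ : ℝ → Fin n → ℝ := fun t => if t ≤ T then φ t else ψ (t - T) with hχ
    have hχsol : IsSol f (T + S₀) χ := RIaux.isSol_concat hT hS₀.le hφ hψ hψ0
    have hχ0 : χ 0 = ω := by simp [hχ, hT, hφ0]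
    have hPχ := ha (T + S₀) (by linarith) χ hχsol hχ0
    have hψP : ∀ s ∈ Icc (0:ℝ) S₀, ψ s ∈ P := by
      intro s hs
      have h1 := hPχ (T + s) ⟨by linarith [hs.1], by linarith [hs.2]⟩
      rcases eq_or_lt_of_le hs.1 with h0 | h0
      · rw [← h0, hψ0]; exact hPT
      · have hgt : ¬ (T + s ≤ T) := by linarith
        simpa [hχ, hgt, add_sub_cancel_left] using h1
    obtain ⟨s, hs, hne⟩ := RIaux.exists_escape hFv hS₀ hψ
    exact ⟨hPT, s, hs.1, ψ, RIaux.isSol_mono hψ hs.2, hψ0,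
      fun u hu => hψP u ⟨hu.1, hu.2.trans hs.2⟩, by rwa [hψ0] at hne⟩
  · intro hb T hT φ hφ hφ0 t ht
    have h0P : φ 0 ∈ P := by
      have := hb 0 le_rfl φ (RIaux.isSol_mono hφ hT) hφ0 (by
        intro u hu
        have hu0 : u = 0 := le_antisymm hu.2 hu.1
        simp [hu0])
      exact this.1
    set B : Set ℝ := {u | u ∈ Icc (0:ℝ) T ∧ ∀ s ∈ Icc (0:ℝ) u, φ s ∈ P} with hB
    have hB0 : (0:ℝ) ∈ B := ⟨⟨le_rfl, hT⟩, fun s hs => by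
      have hs0 : s = 0 := le_antisymm hs.2 hs.1
      rwa [hs0]⟩
    have hBne : B.Nonempty := ⟨0, hB0⟩
    have hBbdd : BddAbove B := ⟨T, fun u hu => hu.1.2⟩
    set c := sSup B with hc
    have hc0 : 0 ≤ c := le_csSup hBbdd hB0
    have hcT : c ≤ T := csSup_le hBne fun u hu => hu.1.2
    have hPlt : ∀ s ∈ Ico (0:ℝ) c, φ s ∈ P := by
      intro s hs
      obtain ⟨u, huB, hsu⟩ := exists_lt_of_lt_csSup hBne hs.2
      exact huB.2 s ⟨hs.1, hsu.le⟩
    obtain ⟨hPc, S, hS, ψ, hψ, hψ0, hψP, hψne⟩ :=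
      hb c hc0 φ (RIaux.isSol_mono hφ hcT) hφ0 (by
        intro u hu
        rcases eq_or_lt_of_le hu.2 with h | h
        · right; rw [h]; exact rfl
        · left; exact hPlt u ⟨hu.1, h⟩)
    have hcB : c ∈ B := ⟨⟨hc0, hcT⟩, fun s hs => by
      rcases eq_or_lt_of_le hs.2 with h | h
      · rw [h]; exact hPc
      · exact hPlt s ⟨hs.1, h⟩⟩
    have hcT' : c = T := by
      by_contra hne
      have hlt : c < T := lt_of_le_of_ne hcT hne
      set δ := min S (T - c) with hδ
      have hδ0 : 0 < δ := by rw [hδ]; exact lt_min hS (by linarith)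
      have hδS : δ ≤ S := min_le_left _ _
      have hδT : c + δ ≤ T := by
        have h5 := min_le_right S (T - c)
        linarith
      set g : ℝ → Fin n → ℝ := fun s => φ (c + s) with hg
      have hgsol : IsSol f δ g := by
        intro s hs
        have hmem : c + s ∈ Icc (0:ℝ) T := ⟨by linarith [hs.1], by linarith [hs.2]⟩
        have hout := hφ (c + s) hmem
        have hin : HasDerivWithinAt (fun u : ℝ => c + u) 1 (Icc 0 δ) s :=
          ((hasDerivAt_id s).const_add c).hasDerivWithinAt
        have hmaps : MapsTo (fun u : ℝ => c + u) (Icc 0 δ) (Icc 0 T) := by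
          intro u hu; simp only [mem_Icc] at hu ⊢; constructor <;> linarith
        have hcomp := hout.scomp s hin hmaps
        simpa [Function.comp_def, hg] using hcomp
      have huniq : EqOn ψ g (Icc 0 δ) :=
        RIaux.sol_unique (RIaux.isSol_mono hψ hδS) hgsol (by simp [hg, hψ0])
      have hmemB : c + δ ∈ B := by
        refine ⟨⟨by linarith, hδT⟩, fun s hs => ?_⟩
        rcases le_or_gt s c with h | h
        · exact hcB.2 s ⟨hs.1, h⟩
        · have h1 : s - c ∈ Icc (0:ℝ) δ := ⟨by linarith, by linarith [hs.2]⟩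
          have h2 := huniq h1
          have h3 := hψP (s - c) ⟨h1.1, h1.2.trans hδS⟩
          rw [h2] at h3
          have h4 : c + (s - c) = s := by ring
          simpa [hg, h4] using h3
      have := le_csSup hBbdd hmemB
      linarith
    exact hcB.2 t ⟨ht.1, by rw [hcT']; exact ht.2⟩
end

section
/- Local progress for non-strict polynomial inequalities (LP≥*): Let f be a polynomial vector field on ℝⁿ and let p be a polynomial with rank N with respect to f. If ω ∈ ℝⁿ satisfies the weak progress predicate Prog≥_f(p)(ω), then there exist T > 0 and a solution φ : [0,T] → ℝⁿ of x' = f(x) with φ(0) = ω and p(φ(t)) ≥ 0 for all t ∈ [0,T]. -/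
open MvPolynomial Set

/-- `N` is a rank of `p` with respect to `f`. -/
def IsRank {n : ℕ} (f : Fin n → MvPolynomial (Fin n) ℝ)
    (p : MvPolynomial (Fin n) ℝ) (N : ℕ) : Prop :=
  1 ≤ N ∧ ∃ g : ℕ → MvPolynomial (Fin n) ℝ,
    (lieD f)^[N] p = ∑ i ∈ Finset.range N, g i * (lieD f)^[i] p

/-- Strict progress predicate: the first significant Lie derivative is positive. -/
def ProgGt {n : ℕ} (f : Fin n → MvPolynomial (Fin n) ℝ)
    (p : MvPolynomial (Fin n) ℝ) (N : ℕ) (ω : Fin n → ℝ) : Prop :=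
  ∃ k < N, (∀ j < k, eval ω ((lieD f)^[j] p) = 0) ∧ 0 < eval ω ((lieD f)^[k] p)

/-- Weak progress predicate. -/
def ProgGe {n : ℕ} (f : Fin n → MvPolynomial (Fin n) ℝ)
    (p : MvPolynomial (Fin n) ℝ) (N : ℕ) (ω : Fin n → ℝ) : Prop :=
  ProgGt f p N ω ∨ ∀ i < N, eval ω ((lieD f)^[i] p) = 0


lemma eval_hasDerivAt {n : ℕ} {φ : ℝ → Fin n → ℝ} {v : Fin n → ℝ} {t : ℝ}
    (hφ : HasDerivAt φ v t) (q : MvPolynomial (Fin n) ℝ) :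
    HasDerivAt (fun s => eval (φ s) q) (∑ i, eval (φ t) (pderiv i q) * v i) t := by
  induction q using MvPolynomial.induction_on with
  | C a => simpa using hasDerivAt_const t (a : ℝ)
  | add p q hp hq =>
      simpa [map_add, add_mul, Finset.sum_add_distrib] using hp.fun_add hq
  | mul_X p i hp =>
      have hcoord : HasDerivAt (fun s => φ s i) (v i) t := hasDerivAt_pi.mp hφ i
      have h2 : HasDerivAt (fun s => eval (φ s) p * φ s i) _ t := hp.fun_mul hcoord
      have hfun : (fun s => eval (φ s) p * φ s i) = fun s => eval (φ s) (p * X i) := by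
        funext s; simp
      rw [hfun] at h2
      convert h2 using 1
      classical
      simp [pderiv_mul, pderiv_X, Pi.single_apply, add_mul, Finset.sum_add_distrib,
        Finset.sum_mul, apply_ite (eval (φ t)), mul_ite, Finset.mul_sum]
      rw [add_comm]
      congr 1
      exact Finset.sum_congr rfl fun x _ => by ring

lemma contDiff_mveval {n : ℕ} (q : MvPolynomial (Fin n) ℝ) :
    ContDiff ℝ 1 fun x : Fin n → ℝ => eval x q := by
  induction q using MvPolynomial.induction_on with
  | C a => simpa using contDiff_const
  | add p q hp hq => simpa using hp.add hq
  | mul_X p i hp => simpa using hp.mul (contDiff_apply (𝕜 := ℝ) (E := ℝ) i)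

/-- Local progress for non-strict polynomial inequalities (LP≥*). -/
theorem LP_geq {n : ℕ} (hn : 1 ≤ n) (f : Fin n → MvPolynomial (Fin n) ℝ)
    (p : MvPolynomial (Fin n) ℝ) (N : ℕ) (hN : IsRank f p N)
    (ω : Fin n → ℝ) (hprog : ProgGe f p N ω) :
    ∃ T : ℝ, 0 < T ∧ ∃ φ : ℝ → (Fin n → ℝ), IsSol f T φ ∧ φ 0 = ω ∧
      ∀ t ∈ Icc (0 : ℝ) T, 0 ≤ eval (φ t) p := by
  obtain ⟨hN1, g, hg⟩ := hN
  -- existence of a local solution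
  have hv : ContDiff ℝ 1 (fun x : Fin n → ℝ => fun i => eval x (f i)) :=
    contDiff_pi.2 fun i => contDiff_mveval (f i)
  obtain ⟨φ, hφ0, ε, hε, hφ⟩ :=
    (hv.contDiffAt (x := ω)).exists_forall_mem_closedBall_exists_eq_forall_mem_Ioo_hasDerivAt₀ (0 : ℝ)
  rw [zero_sub, zero_add] at hφ
  -- h j t = value of the j-th Lie derivative along the solution
  set h : ℕ → ℝ → ℝ := fun j t => eval (φ t) ((lieD f)^[j] p) with hh
  have hD : ∀ j, ∀ t ∈ Ioo (-ε) ε, HasDerivAt (h j) (h (j + 1) t) t := by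
    intro j t ht
    have h1 := eval_hasDerivAt (hφ t ht) ((lieD f)^[j] p)
    have : h (j + 1) t = ∑ i, eval (φ t) (pderiv i ((lieD f)^[j] p)) * eval (φ t) (f i) := by
      simp [hh, Function.iterate_succ_apply', lieD]
    rw [this]; exact h1
  rcases hprog with ⟨k, hkN, hz, hpos⟩ | hall
  · -- strict progress case
    have h0mem : (0 : ℝ) ∈ Ioo (-ε) ε := ⟨by linarith, hε⟩
    have hc0 : ContinuousAt (h k) 0 := (hD k 0 h0mem).continuousAt
    have hk0 : 0 < h k 0 := by rw [hh]; simpa [hφ0] using hpos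
    have hev : ∀ᶠ t in nhds (0 : ℝ), 0 < h k t := hc0.eventually (eventually_gt_nhds hk0)
    obtain ⟨δ, hδ, hball⟩ := Metric.eventually_nhds_iff.mp hev
    set T := min (δ / 2) (ε / 4) with hT
    have hTpos : 0 < T := lt_min (by linarith) (by linarith)
    have hTδ : T < δ := lt_of_le_of_lt (min_le_left _ _) (by linarith)
    have hTε : T < ε := lt_of_le_of_lt (min_le_right _ _) (by linarith)
    have hsub : Icc (0 : ℝ) T ⊆ Ioo (-ε) ε := fun t ht =>
      ⟨by linarith [ht.1], by linarith [ht.2]⟩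
    have key : ∀ m, ∀ t ∈ Icc (0 : ℝ) T, 0 ≤ h (k - m) t := by
      intro m
      induction m with
      | zero =>
        intro t ht
        have : dist t 0 < δ := by
          rw [Real.dist_eq, sub_zero, abs_of_nonneg ht.1]; linarith [ht.2]
        exact le_of_lt (by simpa using hball this)
      | succ m ih =>
        by_cases hm : m < k
        · have hj : k - (m + 1) < k := by omega
          have hj1 : k - (m + 1) + 1 = k - m := by omega
          have hmono : MonotoneOn (h (k - (m + 1))) (Icc 0 T) := by
            apply monotoneOn_of_deriv_nonneg (convex_Icc 0 T)
            · exact fun t ht => ((hD _ t (hsub ht)).continuousAt).continuousWithinAt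
            · rw [interior_Icc]
              exact fun t ht =>
                ((hD _ t (hsub (Ioo_subset_Icc_self ht))).differentiableAt).differentiableWithinAt
            · intro t ht
              rw [interior_Icc] at ht
              rw [(hD _ t (hsub (Ioo_subset_Icc_self ht))).deriv, hj1]
              exact ih t (Ioo_subset_Icc_self ht)
          have h00 : h (k - (m + 1)) 0 = 0 := by
            rw [hh]; simpa [hφ0] using hz _ hj
          intro t ht
          have := hmono (left_mem_Icc.2 hTpos.le) ht ht.1
          linarith [h00 ▸ this]
        · have : k - (m + 1) = k - m := by omega
          rw [this]; exact ih
    refine ⟨T, hTpos, φ, fun t ht => (hφ t (hsub ht)).hasDerivWithinAt, hφ0, ?_⟩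
    intro t ht
    have := key k t ht
    rw [Nat.sub_self, hh] at this
    simpa using this
  · -- all Lie derivatives vanish: solution stays on the zero set
    set T := ε / 2 with hT
    have hTpos : 0 < T := by positivity
    have hsub : Icc (0 : ℝ) T ⊆ Ioo (-ε) ε := fun t ht =>
      ⟨by linarith [ht.1], by linarith [ht.2]⟩
    set H : ℝ → (Fin N → ℝ) := fun t i => h i t with hH
    set c : Fin N → ℝ → ℝ := fun j t => eval (φ (min (max t 0) T)) (g j) with hc
    have hclamp : ∀ t, min (max t 0) T ∈ Icc (0 : ℝ) T := fun t =>
      ⟨le_min (le_max_right _ _) hTpos.le, min_le_right _ _⟩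
    have hceq : ∀ j, ∀ t ∈ Icc (0 : ℝ) T, c j t = eval (φ t) (g j) := by
      intro j t ht
      show eval (φ (min (max t 0) T)) (g (j : ℕ)) = _
      rw [max_eq_left ht.1, min_eq_left ht.2]
    have hgcont : ∀ j : Fin N, ContinuousOn (fun t => eval (φ t) (g j)) (Icc (0 : ℝ) T) := by
      intro j
      intro t ht
      exact ((MvPolynomial.continuous_eval (p := g j)).continuousAt.comp
        (hφ t (hsub ht)).continuousAt).continuousWithinAt
    choose C hC using fun j : Fin N =>
      isCompact_Icc.exists_bound_of_continuousOn (hgcont j)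
    have hCnonneg : ∀ j, 0 ≤ C j := fun j =>
      le_trans (norm_nonneg _) (hC j 0 (left_mem_Icc.2 hTpos.le))
    have hcbound : ∀ j t, |c j t| ≤ C j := by
      intro j t
      have := hC j _ (hclamp t)
      simpa [hc, Real.norm_eq_abs] using this
    set V : ℝ → (Fin N → ℝ) → (Fin N → ℝ) := fun t y i =>
      if hi : (i : ℕ) + 1 < N then y ⟨(i : ℕ) + 1, hi⟩ else ∑ j, c j t * y j with hV
    have hKpos : (0 : ℝ) ≤ max 1 (∑ j, C j) := le_trans zero_le_one (le_max_left _ _)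
    set K : NNReal := ⟨max 1 (∑ j, C j), hKpos⟩ with hK
    have hlip : ∀ t, LipschitzWith K (V t) := by
      intro t
      apply LipschitzWith.of_dist_le_mul
      intro y y'
      have hd : (0 : ℝ) ≤ (K : ℝ) * dist y y' := mul_nonneg hKpos dist_nonneg
      rw [dist_pi_le_iff hd]
      intro i
      simp only [hV]
      split_ifs with hi
      · calc dist (y ⟨(i : ℕ) + 1, hi⟩) (y' ⟨(i : ℕ) + 1, hi⟩) ≤ dist y y' :=
              dist_le_pi_dist y y' _
          _ ≤ (K : ℝ) * dist y y' :=
              le_mul_of_one_le_left dist_nonneg (le_max_left _ _)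
      · rw [Real.dist_eq, ← Finset.sum_sub_distrib]
        calc |∑ j, (c j t * y j - c j t * y' j)| ≤ ∑ j, |c j t * y j - c j t * y' j| :=
              Finset.abs_sum_le_sum_abs _ _
          _ ≤ ∑ j, C j * dist y y' := by
              apply Finset.sum_le_sum
              intro j _
              rw [← mul_sub, abs_mul]
              exact mul_le_mul (hcbound j t) (by
                rw [← Real.dist_eq]; exact dist_le_pi_dist y y' j) (abs_nonneg _)
                (hCnonneg j)
          _ = (∑ j, C j) * dist y y' := by rw [Finset.sum_mul]
          _ ≤ (K : ℝ) * dist y y' :=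
              mul_le_mul_of_nonneg_right (le_max_right _ _) dist_nonneg
    have hHD : ∀ t ∈ Icc (0 : ℝ) T, HasDerivAt H (V t (H t)) t := by
      intro t ht
      apply hasDerivAt_pi.mpr
      intro i
      have hcomp : (fun s => H s i) = h (i : ℕ) := rfl
      rw [hcomp]
      have hder := hD (i : ℕ) t (hsub ht)
      have : V t (H t) i = h ((i : ℕ) + 1) t := by
        simp only [hV]
        split_ifs with hi
        · rfl
        · have hiN : (i : ℕ) + 1 = N := by omega
          have hsum : h ((i : ℕ) + 1) t = ∑ j ∈ Finset.range N, eval (φ t) (g j) * h j t := by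
            have h2 := congrArg (eval (φ t)) hg
            rw [map_sum] at h2
            simp only [eval_mul] at h2
            show eval (φ t) ((lieD f)^[(i : ℕ) + 1] p) = _
            rw [hiN]
            exact h2.trans (Finset.sum_congr rfl fun j _ => rfl)
          rw [hsum, Finset.sum_range fun j => eval (φ t) (g j) * h j t]
          apply Finset.sum_congr rfl
          intro j _
          rw [hceq j t ht]
      rw [this]
      exact hder
    have hH' : ∀ t ∈ Ico (0 : ℝ) T, HasDerivWithinAt H (V t (H t)) (Ici t) t := fun t ht =>
      (hHD t (Ico_subset_Icc_self ht)).hasDerivWithinAt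
    have hHcont : ContinuousOn H (Icc (0 : ℝ) T) := fun t ht =>
      (hHD t ht).continuousAt.continuousWithinAt
    have hzero' : ∀ t ∈ Ico (0 : ℝ) T,
        HasDerivWithinAt (fun _ : ℝ => (0 : Fin N → ℝ)) (V t 0) (Ici t) t := by
      intro t ht
      have : V t 0 = 0 := by
        funext i
        simp only [hV]
        split_ifs <;> simp
      rw [this]
      exact (hasDerivAt_const t _).hasDerivWithinAt
    have hinit : H 0 = (fun _ : ℝ => (0 : Fin N → ℝ)) 0 := by
      funext i
      show eval (φ 0) ((lieD f)^[(i : ℕ)] p) = 0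
      rw [hφ0]
      exact hall _ i.isLt
    have heq := ODE_solution_unique hlip hHcont hH' continuousOn_const hzero' hinit
    refine ⟨T, hTpos, φ, fun t ht => (hφ t (hsub ht)).hasDerivWithinAt, hφ0, ?_⟩
    intro t ht
    have h0 : H t ⟨0, hN1⟩ = 0 := by rw [heq ht]; rfl
    have : h 0 t = 0 := h0
    rw [hh] at this
    simp only [Function.iterate_zero, id] at this
    rw [this]
end

section
/- Semantic soundness of vectorial differential ghosts (DG): Let f be a polynomial vector field on ℝⁿ, let m ≥ 1, and let a be an m×m matrix and b an m-vector whose entries are multivariate polynomials in the variables x₁,…,xₙ. Then for every solution φ : [0,T] → ℝⁿ of x' = f(x) and every y₀ ∈ ℝᵐ there exists a differentiable function ψ : [0,T] → ℝᵐ with ψ(0) = y₀ and ψ'(t) = a(φ(t))·ψ(t) + b(φ(t)) for all t ∈ [0,T]; in other words, the solution of the ghost equations y' = a(x)·y + b(x), which are linear in y, exists on the entire interval of existence of φ. -/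
open MvPolynomial Set Filter Topology

section Glue

variable {E : Type*} [NormedAddCommGroup E] [NormedSpace ℝ E]

/-- Gluing two solutions of an ODE at a common point. -/
theorem glue_deriv {s c e : ℝ} (hsc : s ≤ c) (hce : c ≤ e)
    (ψ₁ ψ₂ : ℝ → E) (d : ℝ → E)
    (h₁ : ∀ t ∈ Icc s c, HasDerivWithinAt ψ₁ (d t) (Icc s c) t)
    (h₂ : ∀ t ∈ Icc c e, HasDerivWithinAt ψ₂ (d t) (Icc c e) t)
    (heq : ψ₁ c = ψ₂ c) :
    ∀ t ∈ Icc s e, HasDerivWithinAt (fun t => if t ≤ c then ψ₁ t else ψ₂ t)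
      (d t) (Icc s e) t := by
  intro t ht
  rcases lt_trichotomy t c with htc | htc | htc
  · have hmem : Icc s c ∈ 𝓝[Icc s e] t :=
      Filter.mem_of_superset (inter_mem_nhdsWithin _ (Iic_mem_nhds htc))
        (fun x hx => ⟨hx.1.1, hx.2⟩)
    refine ((h₁ t ⟨ht.1, htc.le⟩).mono_of_mem_nhdsWithin hmem).congr_of_eventuallyEq ?_ (if_pos htc.le)
    filter_upwards [mem_nhdsWithin_of_mem_nhds (Iic_mem_nhds htc)] with x hx
    exact if_pos hx
  · subst htc
    have h1 : HasDerivWithinAt (fun x => if x ≤ t then ψ₁ x else ψ₂ x) (d t) (Icc s t) t := by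
      refine (h₁ t (right_mem_Icc.2 hsc)).congr (fun x hx => if_pos hx.2) (if_pos le_rfl)
    have h2 : HasDerivWithinAt (fun x => if x ≤ t then ψ₁ x else ψ₂ x) (d t) (Icc t e) t := by
      refine (h₂ t (left_mem_Icc.2 hce)).congr (fun x hx => ?_) (by simp [heq])
      rcases eq_or_lt_of_le hx.1 with h | h
      · simp [← h, heq]
      · rw [if_neg (not_le.2 h)]
    have := h1.union h2
    rwa [Icc_union_Icc_eq_Icc hsc hce] at this
  · have hmem : Icc c e ∈ 𝓝[Icc s e] t :=
      Filter.mem_of_superset (inter_mem_nhdsWithin _ (Ioi_mem_nhds htc))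
        (fun x hx => ⟨hx.2.le, hx.1.2⟩)
    refine ((h₂ t ⟨htc.le, ht.2⟩).mono_of_mem_nhdsWithin hmem).congr_of_eventuallyEq ?_
      (if_neg (not_le.2 htc))
    filter_upwards [mem_nhdsWithin_of_mem_nhds (Ioi_mem_nhds htc)] with x hx
    exact if_neg (not_le.2 hx)

/-- Global existence for ODEs with a uniform Lipschitz condition in space. -/
theorem global_existence [CompleteSpace E]
    (v : ℝ → E → E) (T : ℝ) (hT : 0 ≤ T) (L : NNReal) (B : ℝ) (hB0 : 0 ≤ B)
    (hlip : ∀ t ∈ Icc (0:ℝ) T, LipschitzWith L (v t))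
    (hcont : ∀ x, ContinuousOn (fun t => v t x) (Icc (0:ℝ) T))
    (hB : ∀ t ∈ Icc (0:ℝ) T, ‖v t 0‖ ≤ B)
    (y₀ : E) :
    ∃ ψ : ℝ → E, ψ 0 = y₀ ∧
      ∀ t ∈ Icc (0:ℝ) T, HasDerivWithinAt ψ (v t (ψ t)) (Icc (0:ℝ) T) t := by
  set δ : ℝ := 1 / (2 * (L:ℝ) + 2) with hδdef
  have hL0 : (0:ℝ) ≤ L := L.coe_nonneg
  have hδ : 0 < δ := by positivity
  have hLδ : (L:ℝ) * δ ≤ 1/2 := by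
    rw [hδdef, mul_one_div, div_le_div_iff₀ (by positivity) two_pos]
    nlinarith
  -- single step
  have step : ∀ s e : ℝ, 0 ≤ s → s ≤ e → e ≤ T → e - s ≤ δ → ∀ z : E,
      ∃ ψ : ℝ → E, ψ s = z ∧ ∀ t ∈ Icc s e, HasDerivWithinAt ψ (v t (ψ t)) (Icc s e) t := by
    intro s e hs0 hse heT hlen z
    set R : ℝ := 2 * δ * ((L:ℝ) * ‖z‖ + B) with hRdef
    have hR : 0 ≤ R := by positivity
    set C : ℝ := (L:ℝ) * (‖z‖ + R) + B with hCdef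
    have hC : 0 ≤ C := by positivity
    have hsub : Icc s e ⊆ Icc (0:ℝ) T := Icc_subset_Icc hs0 heT
    have hpl : IsPicardLindelof v (tmin := s) (tmax := e) ⟨s, left_mem_Icc.2 hse⟩ z
        ⟨R, hR⟩ 0 ⟨C, hC⟩ L := by
      refine ⟨?_, ?_, ?_, ?_⟩
      · intro t ht
        exact (lipschitzOnWith_univ.2 (hlip t (hsub ht))).mono (subset_univ _)
      · intro x _
        exact (hcont x).mono hsub
      · intro t ht x hx
        show ‖v t x‖ ≤ C
        replace hx : x ∈ Metric.closedBall z R := hx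
        have h1 : ‖v t x - v t 0‖ ≤ (L:ℝ) * ‖x‖ := by
          have := (hlip t (hsub ht)).dist_le_mul x 0
          simpa [dist_eq_norm] using this
        have h2 : ‖x‖ ≤ ‖z‖ + R := by
          have hd : ‖x - z‖ ≤ R := by
            simpa [dist_eq_norm] using (Metric.mem_closedBall.1 hx)
          have hzx : z + (x - z) = x := by abel
          calc ‖x‖ = ‖z + (x - z)‖ := by rw [hzx]
            _ ≤ ‖z‖ + ‖x - z‖ := norm_add_le _ _
            _ ≤ ‖z‖ + R := by linarith
        have hvv : v t x - v t 0 + v t 0 = v t x := by abel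
        calc ‖v t x‖ = ‖(v t x - v t 0) + v t 0‖ := by rw [hvv]
          _ ≤ ‖v t x - v t 0‖ + ‖v t 0‖ := norm_add_le _ _
          _ ≤ (L:ℝ) * ‖x‖ + B := add_le_add h1 (hB t (hsub ht))
          _ ≤ (L:ℝ) * (‖z‖ + R) + B := by nlinarith
      · show C * max (e - s) (s - s) ≤ R - 0
        rw [sub_zero]
        have hmax : max (e - s) (s - s) = e - s := by
          rw [sub_self]; exact max_eq_left (by linarith)
        rw [hmax]
        have h1 : C * (e - s) ≤ C * δ := by nlinarith
        have h2 : C * δ ≤ R := by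
          have : (L:ℝ) * R * δ ≤ R / 2 := by nlinarith
          have hh : ((L:ℝ) * ‖z‖ + B) * δ = R / 2 := by rw [hRdef]; ring
          calc C * δ = ((L:ℝ) * ‖z‖ + B) * δ + (L:ℝ) * R * δ := by rw [hCdef]; ring
            _ ≤ R / 2 + R / 2 := by linarith
            _ = R := by ring
        linarith
    exact hpl.exists_eq_forall_mem_Icc_hasDerivWithinAt₀
  -- induction
  have main : ∀ k : ℕ, ∀ s : ℝ, 0 ≤ s → s ≤ T → T - s ≤ k * δ → ∀ z : E,
      ∃ ψ : ℝ → E, ψ s = z ∧ ∀ t ∈ Icc s T, HasDerivWithinAt ψ (v t (ψ t)) (Icc s T) t := by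
    intro k
    induction k with
    | zero =>
      intro s hs0 hsT hlen z
      refine step s T hs0 hsT le_rfl ?_ z
      simp only [Nat.cast_zero, zero_mul] at hlen
      linarith
    | succ k ih =>
      intro s hs0 hsT hlen z
      by_cases hcase : T - s ≤ δ
      · exact step s T hs0 hsT le_rfl hcase z
      · push_neg at hcase
        set s' : ℝ := s + δ with hs'def
        have hss' : s ≤ s' := by linarith
        have hs'T : s' ≤ T := by linarith
        obtain ⟨ψ₁, hψ₁0, hψ₁⟩ := step s s' hs0 hss' hs'T (by simp [hs'def]) z
        obtain ⟨ψ₂, hψ₂0, hψ₂⟩ := ih s' (by linarith) hs'T (by push_cast at hlen ⊢; linarith)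
          (ψ₁ s')
        refine ⟨fun t => if t ≤ s' then ψ₁ t else ψ₂ t, ?_, ?_⟩
        · show (if s ≤ s' then ψ₁ s else ψ₂ s) = z
          rw [if_pos hss']; exact hψ₁0
        have key := glue_deriv hss' hs'T ψ₁ ψ₂
          (fun t => v t (if t ≤ s' then ψ₁ t else ψ₂ t)) ?_ ?_ (hψ₂0.symm)
        · exact key
        · intro t ht
          show HasDerivWithinAt ψ₁ (v t (if t ≤ s' then ψ₁ t else ψ₂ t)) (Icc s s') t
          rw [if_pos ht.2]; exact hψ₁ t ht
        · intro t ht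
          show HasDerivWithinAt ψ₂ (v t (if t ≤ s' then ψ₁ t else ψ₂ t)) (Icc s' T) t
          have : (if t ≤ s' then ψ₁ t else ψ₂ t) = ψ₂ t := by
            rcases eq_or_lt_of_le ht.1 with h | h
            · rw [if_pos h.ge, ← h, hψ₂0]
            · rw [if_neg (not_le.2 h)]
          rw [this]; exact hψ₂ t ht
  obtain ⟨k, hk⟩ := exists_nat_ge (T / δ)
  have : T - 0 ≤ k * δ := by
    rw [sub_zero]
    calc T = T / δ * δ := by field_simp
      _ ≤ k * δ := by nlinarith [hδ]
  exact main k 0 le_rfl hT this y₀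

end Glue

/-- Semantic soundness of vectorial differential ghosts (DG): the linear ghost ODE
`y' = a(x)·y + b(x)` has a solution on the whole interval of existence of `φ`. -/
theorem DG_sound {n : ℕ} (hn : 1 ≤ n) (f : Fin n → MvPolynomial (Fin n) ℝ)
    (m : ℕ) (hm : 1 ≤ m)
    (a : Fin m → Fin m → MvPolynomial (Fin n) ℝ) (b : Fin m → MvPolynomial (Fin n) ℝ)
    (T : ℝ) (hT : 0 ≤ T) (φ : ℝ → (Fin n → ℝ)) (hsol : IsSol f T φ)
    (y₀ : Fin m → ℝ) :
    ∃ ψ : ℝ → (Fin m → ℝ), ψ 0 = y₀ ∧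
      ∀ t ∈ Icc (0 : ℝ) T, HasDerivWithinAt ψ
        (fun i => (∑ j, eval (φ t) (a i j) * ψ t j) + eval (φ t) (b i))
        (Icc (0 : ℝ) T) t := by
  set v : ℝ → (Fin m → ℝ) → (Fin m → ℝ) :=
    fun t y => fun i => (∑ j, eval (φ t) (a i j) * y j) + eval (φ t) (b i) with hvdef
  -- φ is continuous on [0,T]
  have hφc : ContinuousOn φ (Icc (0:ℝ) T) := fun t ht => (hsol t ht).continuousWithinAt
  have hcompact : IsCompact (Icc (0:ℝ) T) := isCompact_Icc
  -- bound on the matrix entries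
  have hAc : ContinuousOn (fun t => (fun p : Fin m × Fin m => eval (φ t) (a p.1 p.2)))
      (Icc (0:ℝ) T) := by
    refine continuousOn_pi.2 fun p => ?_
    exact (MvPolynomial.continuous_eval (p := a p.1 p.2)).comp_continuousOn hφc
  obtain ⟨M₀, hM₀⟩ := hcompact.exists_bound_of_continuousOn hAc
  set M : ℝ := max M₀ 0 with hMdef
  have hM : 0 ≤ M := le_max_right _ _
  have hMb : ∀ t ∈ Icc (0:ℝ) T, ∀ i j, |eval (φ t) (a i j)| ≤ M := by
    intro t ht i j
    have h1 := norm_le_pi_norm (fun p : Fin m × Fin m => eval (φ t) (a p.1 p.2)) (i, j)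
    have h2 := hM₀ t ht
    simp only [Real.norm_eq_abs] at h1
    exact h1.trans (h2.trans (le_max_left _ _))
  -- Lipschitz constant
  set K : NNReal := Real.toNNReal ((m : ℝ) * M) with hKdef
  have hKge : (m : ℝ) * M ≤ (K : ℝ) := by
    rw [hKdef, Real.coe_toNNReal']; exact le_max_left _ _
  have hlip : ∀ t ∈ Icc (0:ℝ) T, LipschitzWith K (v t) := by
    intro t ht
    refine LipschitzWith.of_dist_le_mul fun y z => ?_
    rw [dist_eq_norm, dist_eq_norm]
    have hnn : (0:ℝ) ≤ (K : ℝ) * ‖y - z‖ := by positivity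
    refine (pi_norm_le_iff_of_nonneg hnn).2 fun i => ?_
    have hcomp : (v t y - v t z) i = ∑ j, eval (φ t) (a i j) * (y j - z j) := by
      simp only [hvdef, Pi.sub_apply]
      rw [add_sub_add_right_eq_sub, ← Finset.sum_sub_distrib]
      exact Finset.sum_congr rfl fun j _ => (mul_sub _ _ _).symm
    rw [hcomp, Real.norm_eq_abs]
    calc |∑ j, eval (φ t) (a i j) * (y j - z j)|
        ≤ ∑ j, |eval (φ t) (a i j) * (y j - z j)| := Finset.abs_sum_le_sum_abs _ _
      _ ≤ ∑ _j : Fin m, M * ‖y - z‖ := by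
          refine Finset.sum_le_sum fun j _ => ?_
          rw [abs_mul]
          have h1 : |eval (φ t) (a i j)| ≤ M := hMb t ht i j
          have h2 : |y j - z j| ≤ ‖y - z‖ := by
            have := norm_le_pi_norm (y - z) j
            simpa [Real.norm_eq_abs] using this
          exact mul_le_mul h1 h2 (abs_nonneg _) hM
      _ = (m : ℝ) * M * ‖y - z‖ := by
          rw [Finset.sum_const, Finset.card_univ, Fintype.card_fin, nsmul_eq_mul]; ring
      _ ≤ (K : ℝ) * ‖y - z‖ := by
          have := norm_nonneg (y - z); nlinarith
  -- continuity in t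
  have hcont : ∀ x : Fin m → ℝ, ContinuousOn (fun t => v t x) (Icc (0:ℝ) T) := by
    intro x
    have houter : Continuous (fun u : Fin n → ℝ =>
        (fun i => (∑ j, eval u (a i j) * x j) + eval u (b i) : Fin m → ℝ)) := by
      refine continuous_pi fun i => Continuous.add ?_ ?_
      · exact continuous_finset_sum _ fun j _ =>
          (MvPolynomial.continuous_eval (p := a i j)).mul continuous_const
      · exact MvPolynomial.continuous_eval (p := b i)
    exact houter.comp_continuousOn hφc
  -- bound on v t 0
  obtain ⟨B₀, hB₀⟩ := hcompact.exists_bound_of_continuousOn (hcont 0)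
  have hB : ∀ t ∈ Icc (0:ℝ) T, ‖v t 0‖ ≤ max B₀ 0 :=
    fun t ht => (hB₀ t ht).trans (le_max_left _ _)
  obtain ⟨ψ, hψ0, hψ⟩ := global_existence v T hT K (max B₀ 0) (le_max_right _ _)
    hlip hcont hB y₀
  exact ⟨ψ, hψ0, hψ⟩
end
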